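/- arXiv:1101.1990 — 5 statements merged into one kernel-verified Lean document; each statement's English description precedes it below -/
import Mathlib

section
/- Let A₀ and A₁ be real normed linear spaces such that A₀ is continuously embedded in A₁ (i.e., A₀ ⊆ A₁ and there is a constant C > 0 with ‖a‖_{A₁} ≤ C‖a‖_{A₀} for all a ∈ A₀), and let M₊ be a seminormed nonnegative cone in A₀ that is compactly embedded in A₀. Then for every η > 0 there exists a constant c_η > 0 such that ‖u − v‖_{A₀} ≤ η([u] + [v]) + c_η‖u − v‖_{A₁} for all u, v ∈ M₊. -/
open Filter Topology

/-- Ehrling-type lemma for seminormed nonnegative cones (Lemma 1 of Dubinskiĭ). -/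
theorem stmt0
    {A₀ A₁ : Type*} [NormedAddCommGroup A₀] [NormedSpace ℝ A₀]
    [NormedAddCommGroup A₁] [NormedSpace ℝ A₁]
    -- A₀ is continuously embedded in A₁ via the injective linear map `j`
    (j : A₀ →ₗ[ℝ] A₁) (hj : Function.Injective j)
    (C : ℝ) (hC : 0 < C) (hjC : ∀ a : A₀, ‖j a‖ ≤ C * ‖a‖)
    -- M₊ = S is a seminormed nonnegative cone in A₀ with seminorm ν
    (S : Set A₀) (ν : A₀ → ℝ)
    (hcone : ∀ φ ∈ S, ∀ c : ℝ, 0 ≤ c → c • φ ∈ S)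
    (hν0 : ∀ φ ∈ S, 0 ≤ ν φ)
    (hνeq0 : ∀ φ ∈ S, (ν φ = 0 ↔ φ = 0))
    (hνhom : ∀ φ ∈ S, ∀ c : ℝ, 0 ≤ c → ν (c • φ) = c * ν φ)
    -- M₊ is embedded in A₀
    (hemb : ∃ K₀ > 0, ∀ φ ∈ S, ‖φ‖ ≤ K₀ * ν φ)
    -- the embedding of M₊ in A₀ is compact
    (hcpt : ∀ a : ℕ → A₀, (∀ n, a n ∈ S) → (∃ K : ℝ, ∀ n, ν (a n) ≤ K) →
      ∃ (ψ : ℕ → ℕ) (l : A₀), StrictMono ψ ∧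
        Tendsto (fun n => a (ψ n)) atTop (𝓝 l)) :
    ∀ η > (0 : ℝ), ∃ cη > (0 : ℝ), ∀ u ∈ S, ∀ v ∈ S,
      ‖u - v‖ ≤ η * (ν u + ν v) + cη * ‖j u - j v‖ := by
  obtain ⟨K₀, hK₀, hK⟩ := hemb
  intro η hη
  by_contra hcon
  push_neg at hcon
  choose u hu v hv hlt using fun n : ℕ => hcon (n + 1) (by positivity)
  set d : ℕ → ℝ := fun n => ν (u n) + ν (v n) with hd_def
  have hd : ∀ n, 0 < d n := by
    intro n
    rcases lt_or_ge 0 (d n) with h | h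
    · exact h
    · exfalso
      have hνu : ν (u n) = 0 := le_antisymm (by
          have := hν0 _ (hv n); simp only [hd_def] at h; linarith) (hν0 _ (hu n))
      have hνv : ν (v n) = 0 := le_antisymm (by
          have := hν0 _ (hu n); simp only [hd_def] at h; linarith) (hν0 _ (hv n))
      have hu0 : u n = 0 := (hνeq0 _ (hu n)).1 hνu
      have hv0 : v n = 0 := (hνeq0 _ (hv n)).1 hνv
      have h0S : (0:A₀) ∈ S := by
        simpa using hcone _ (hu n) 0 le_rfl
      have hν00 : ν (0:A₀) = 0 := (hνeq0 _ h0S).2 rfl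
      have := hlt n
      rw [hu0, hv0] at this
      simp [hν00] at this
  set u' : ℕ → A₀ := fun n => (d n)⁻¹ • u n with hu'_def
  set v' : ℕ → A₀ := fun n => (d n)⁻¹ • v n with hv'_def
  have hinv : ∀ n, (0:ℝ) ≤ (d n)⁻¹ := fun n => (inv_pos.mpr (hd n)).le
  have hu' : ∀ n, u' n ∈ S := fun n => hcone _ (hu n) _ (hinv n)
  have hv' : ∀ n, v' n ∈ S := fun n => hcone _ (hv n) _ (hinv n)
  have hνu' : ∀ n, ν (u' n) = (d n)⁻¹ * ν (u n) := fun n =>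
    hνhom _ (hu n) _ (hinv n)
  have hνv' : ∀ n, ν (v' n) = (d n)⁻¹ * ν (v n) := fun n =>
    hνhom _ (hv n) _ (hinv n)
  have hsum : ∀ n, ν (u' n) + ν (v' n) = 1 := by
    intro n
    rw [hνu', hνv', ← mul_add]
    exact inv_mul_cancel₀ (hd n).ne'
  -- scaled inequality
  have hscaled : ∀ n, η + (n + 1) * ‖j (u' n) - j (v' n)‖ < ‖u' n - v' n‖ := by
    intro n
    have h1 : u' n - v' n = (d n)⁻¹ • (u n - v n) := by
      simp [hu'_def, hv'_def, smul_sub]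
    have h2 : j (u' n) - j (v' n) = (d n)⁻¹ • (j (u n) - j (v n)) := by
      simp [hu'_def, hv'_def, smul_sub, map_smul]
    rw [h1, h2, norm_smul, norm_smul, Real.norm_eq_abs,
      abs_of_nonneg (hinv n)]
    have := mul_lt_mul_of_pos_left (hlt n) (inv_pos.mpr (hd n))
    have hdn : (d n)⁻¹ * d n = 1 := inv_mul_cancel₀ (hd n).ne'
    nlinarith [this, hdn]
  have hνu1 : ∀ n, ν (u' n) ≤ 1 := fun n => by
    have := hν0 _ (hv' n); linarith [hsum n]
  have hνv1 : ∀ n, ν (v' n) ≤ 1 := fun n => by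
    have := hν0 _ (hu' n); linarith [hsum n]
  obtain ⟨ψ, p, hψ, hp⟩ := hcpt u' hu' ⟨1, hνu1⟩
  obtain ⟨ψ', q, hψ', hq⟩ := hcpt (fun n => v' (ψ n)) (fun n => hv' _)
    ⟨1, fun n => hνv1 _⟩
  set φ : ℕ → ℕ := fun n => ψ (ψ' n) with hφ_def
  have hφmono : StrictMono φ := hψ.comp hψ'
  have hup : Tendsto (fun n => u' (φ n)) atTop (𝓝 p) :=
    hp.comp hψ'.tendsto_atTop
  have hvq : Tendsto (fun n => v' (φ n)) atTop (𝓝 q) := hq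
  have hw : Tendsto (fun n => u' (φ n) - v' (φ n)) atTop (𝓝 (p - q)) :=
    hup.sub hvq
  -- j is continuous
  let J : A₀ →L[ℝ] A₁ := j.mkContinuous C hjC
  have hJ : ∀ a, J a = j a := fun a => rfl
  have hjw : Tendsto (fun n => j (u' (φ n) - v' (φ n))) atTop (𝓝 (j (p - q))) := by
    exact (J.continuous.tendsto (p - q)).comp hw
  -- norm bound on j (u' - v')
  have hnorm : ∀ n, ‖u' n - v' n‖ ≤ 2 * K₀ := by
    intro n
    calc ‖u' n - v' n‖ ≤ ‖u' n‖ + ‖v' n‖ := norm_sub_le _ _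
    _ ≤ K₀ * ν (u' n) + K₀ * ν (v' n) :=
        add_le_add (hK _ (hu' n)) (hK _ (hv' n))
    _ = K₀ * (ν (u' n) + ν (v' n)) := by ring
    _ = K₀ := by rw [hsum n]; ring
    _ ≤ 2 * K₀ := by linarith
  have hjbound : ∀ n, ‖j (u' (φ n) - v' (φ n))‖ ≤ 2 * K₀ / (n + 1) := by
    intro n
    have h1 := hscaled (φ n)
    have hφn : (n : ℝ) + 1 ≤ (φ n : ℝ) + 1 := by
      have hnle : n ≤ φ n := hφmono.le_apply
      have := (Nat.cast_le (α := ℝ)).mpr hnle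
      linarith
    have h2 : ((φ n : ℝ) + 1) * ‖j (u' (φ n)) - j (v' (φ n))‖ ≤ 2 * K₀ := by
      nlinarith [hnorm (φ n), hη.le, norm_nonneg (j (u' (φ n)) - j (v' (φ n)))]
    have h3 : ((n : ℝ) + 1) * ‖j (u' (φ n)) - j (v' (φ n))‖ ≤ 2 * K₀ := by
      nlinarith [norm_nonneg (j (u' (φ n)) - j (v' (φ n)))]
    have hpos : (0:ℝ) < (n : ℝ) + 1 := by positivity
    rw [map_sub, le_div_iff₀ hpos, mul_comm]
    exact h3
  have hjw0 : Tendsto (fun n => j (u' (φ n) - v' (φ n))) atTop (𝓝 0) := by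
    rw [tendsto_zero_iff_norm_tendsto_zero]
    apply squeeze_zero (fun n => norm_nonneg _) hjbound
    have : Tendsto (fun n : ℕ => 2 * K₀ / (n + 1)) atTop (𝓝 0) := by
      apply Tendsto.div_atTop tendsto_const_nhds
      exact tendsto_atTop_add_const_right _ _ tendsto_natCast_atTop_atTop
    exact this
  have hjeq : j (p - q) = 0 := tendsto_nhds_unique hjw hjw0
  have hpq : p = q := by
    have : p - q = 0 := hj (by rw [hjeq, map_zero])
    exact sub_eq_zero.mp this
  have hnlim : Tendsto (fun n => ‖u' (φ n) - v' (φ n)‖) atTop (𝓝 0) := by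
    have h := hw.norm
    rw [hpq, sub_self, norm_zero] at h
    exact h
  have hle : η ≤ 0 := by
    refine ge_of_tendsto' hnlim fun n => ?_
    have h := hscaled (φ n)
    nlinarith [norm_nonneg (j (u' (φ n)) - j (v' (φ n))), (Nat.cast_nonneg (φ n) : (0:ℝ) ≤ φ n)]
  linarith
end

section
/- Let T > 0, let A₁ be a real Banach space, let M₊ be a seminormed nonnegative cone in A₁ that is (continuously) embedded in A₁, and let 1 ≤ p ≤ ∞, 1 ≤ p₁ ≤ ∞. Then every φ ∈ Y₊ is almost everywhere on [0,T] equal to a continuous function from [0,T] to A₁, and there exists a constant C > 0, independent of φ, such that (identifying φ with its continuous representative) max_{t ∈ [0,T]} ‖φ(t)‖_{A₁} ≤ C [φ]_{Y₊}; that is, Y₊ is continuously embedded in C([0,T]; A₁). -/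
open Filter Topology MeasureTheory
open scoped ENNReal

private lemma aux_L1_le {E : Type*} [NormedAddCommGroup E] {μ : MeasureTheory.Measure ℝ}
    [MeasureTheory.IsFiniteMeasure μ] {M : ℝ} (hM0 : 0 ≤ M)
    (hμuniv : μ Set.univ ≤ ENNReal.ofReal M)
    (hpow : ∀ q : ℝ≥0∞, 1 ≤ q →
      (μ Set.univ) ^ (1/(1:ℝ≥0∞).toReal - 1/q.toReal) ≤ ENNReal.ofReal M)
    (f : ℝ → E) (q : ℝ≥0∞) (hq : 1 ≤ q)
    (hint : MeasureTheory.Integrable f μ) (hfin : MeasureTheory.eLpNorm f q μ < ⊤) :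
    ∫ s, ‖f s‖ ∂μ ≤ M * (MeasureTheory.eLpNorm f q μ).toReal := by
  have h1 : ENNReal.ofReal (∫ s, ‖f s‖ ∂μ) = eLpNorm f 1 μ := by
    rw [ofReal_integral_norm_eq_lintegral_enorm hint, eLpNorm_one_eq_lintegral_enorm]
  have h3 : eLpNorm f 1 μ ≤ eLpNorm f q μ * ENNReal.ofReal M := by
    calc eLpNorm f 1 μ
        ≤ eLpNorm f q μ * μ Set.univ ^ (1/(1:ℝ≥0∞).toReal - 1/q.toReal) :=
          eLpNorm_le_eLpNorm_mul_rpow_measure_univ hq hint.aestronglyMeasurable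
      _ ≤ eLpNorm f q μ * ENNReal.ofReal M := by gcongr; exact hpow q hq
  have hrhs : eLpNorm f q μ * ENNReal.ofReal M ≠ ⊤ :=
    ENNReal.mul_ne_top hfin.ne ENNReal.ofReal_ne_top
  have h4 := ENNReal.toReal_mono hrhs (h1 ▸ h3)
  rw [ENNReal.toReal_ofReal (integral_nonneg (fun _ => norm_nonneg _))] at h4
  calc ∫ s, ‖f s‖ ∂μ ≤ (eLpNorm f q μ * ENNReal.ofReal M).toReal := h4
    _ = (eLpNorm f q μ).toReal * M := by
        rw [ENNReal.toReal_mul, ENNReal.toReal_ofReal hM0]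
    _ = M * (eLpNorm f q μ).toReal := mul_comm _ _

set_option maxHeartbeats 1000000 in
/-- The seminormed nonnegative cone `Y₊` is continuously embedded in `C([0,T]; A₁)`:
every element of `Y₊` has a continuous representative on `[0,T]`, whose sup-norm is
bounded by a constant multiple of its `Y₊`-seminorm. -/
theorem stmt1
    {A₁ : Type*} [NormedAddCommGroup A₁] [NormedSpace ℝ A₁] [CompleteSpace A₁]
    (T : ℝ) (hT : 0 < T)
    -- M₊ = S is a seminormed nonnegative cone in A₁ with seminorm ν
    (S : Set A₁) (ν : A₁ → ℝ)
    (hcone : ∀ φ ∈ S, ∀ c : ℝ, 0 ≤ c → c • φ ∈ S)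
    (hν0 : ∀ φ ∈ S, 0 ≤ ν φ)
    (hνeq0 : ∀ φ ∈ S, (ν φ = 0 ↔ φ = 0))
    (hνhom : ∀ φ ∈ S, ∀ c : ℝ, 0 ≤ c → ν (c • φ) = c * ν φ)
    -- M₊ is (continuously) embedded in A₁
    (hemb : ∃ K₀ > (0 : ℝ), ∀ φ ∈ S, ‖φ‖ ≤ K₀ * ν φ)
    (p p₁ : ℝ≥0∞) (hp : 1 ≤ p) (hp₁ : 1 ≤ p₁) :
    ∃ C > (0 : ℝ), ∀ φ w : ℝ → A₁,
      -- φ maps [0,T] into M₊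
      (∀ t ∈ Set.Icc (0 : ℝ) T, φ t ∈ S) →
      -- φ is strongly measurable on (0,T)
      AEStronglyMeasurable φ (volume.restrict (Set.Ioc (0 : ℝ) T)) →
      -- t ↦ [φ(t)] is measurable with finite L^p(0,T) norm
      AEMeasurable (fun t => ν (φ t)) (volume.restrict (Set.Ioc (0 : ℝ) T)) →
      eLpNorm (fun t => ν (φ t)) p (volume.restrict (Set.Ioc (0 : ℝ) T)) < ⊤ →
      -- w = dφ/dt is Bochner integrable on (0,T) with finite L^{p₁}(0,T;A₁) norm
      IntegrableOn w (Set.Ioc (0 : ℝ) T) →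
      eLpNorm w p₁ (volume.restrict (Set.Ioc (0 : ℝ) T)) < ⊤ →
      -- φ(t) = φ(0) + ∫₀ᵗ w(s) ds for a.e. t ∈ [0,T]
      (∀ᵐ t ∂volume.restrict (Set.Icc (0 : ℝ) T),
        φ t = φ 0 + ∫ s in (0 : ℝ)..t, w s) →
      -- conclusion: φ has a continuous representative ψ on [0,T] with
      -- max_{t∈[0,T]} ‖ψ(t)‖ ≤ C [φ]_{Y₊}
      ∃ ψ : ℝ → A₁, ContinuousOn ψ (Set.Icc (0 : ℝ) T) ∧
        (∀ᵐ t ∂volume.restrict (Set.Icc (0 : ℝ) T), φ t = ψ t) ∧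
        ∀ t ∈ Set.Icc (0 : ℝ) T,
          ‖ψ t‖ ≤ C *
            ((eLpNorm (fun t => ν (φ t)) p (volume.restrict (Set.Ioc (0 : ℝ) T))).toReal
              + (eLpNorm w p₁ (volume.restrict (Set.Ioc (0 : ℝ) T))).toReal) := by
  obtain ⟨K₀, hK₀, hK⟩ := hemb
  set M : ℝ := max 1 T with hMdef
  have hM1 : (1:ℝ) ≤ M := le_max_left _ _
  have hMT : T ≤ M := le_max_right _ _
  have hM0 : (0:ℝ) < M := lt_of_lt_of_le one_pos hM1
  refine ⟨K₀ * M / T + 2 * M + 1, by positivity, ?_⟩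
  intro φ w hφS hφmeas hνmeas hνLp hwInt hwLp hae
  set μ : Measure ℝ := volume.restrict (Set.Ioc (0:ℝ) T) with hμdef
  haveI : Fact (volume (Set.Ioc (0:ℝ) T) < ⊤) := ⟨by simp⟩
  haveI : IsFiniteMeasure μ := by rw [hμdef]; infer_instance
  have hμuniv : μ Set.univ = ENNReal.ofReal T := by
    rw [hμdef, Measure.restrict_apply_univ, Real.volume_Ioc, sub_zero]
  -- helper: T^(1 - 1/q) ≤ M in ℝ≥0∞
  have hpow : ∀ q : ℝ≥0∞, 1 ≤ q →
      (μ Set.univ) ^ (1/(1:ℝ≥0∞).toReal - 1/q.toReal) ≤ ENNReal.ofReal M := by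
    intro q hq
    rw [hμuniv]
    have he0 : 0 ≤ 1/(1:ℝ≥0∞).toReal - 1/q.toReal := by
      rcases eq_or_ne q ⊤ with h | h
      · simp [h]
      · have h1 : (1:ℝ) ≤ q.toReal := by
          have := ENNReal.toReal_mono h hq
          simpa using this
        have : 1/q.toReal ≤ 1 := by
          rw [div_le_one (lt_of_lt_of_le one_pos h1)]; linarith
        simpa using this
    have he1 : 1/(1:ℝ≥0∞).toReal - 1/q.toReal ≤ 1 := by
      have : 0 ≤ 1/q.toReal := by positivity
      simp only [ENNReal.toReal_one]
      linarith
    rcases le_total (ENNReal.ofReal T) 1 with h | h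
    · exact (ENNReal.rpow_le_one h he0).trans
        (by simpa using (ENNReal.ofReal_le_ofReal hM1 : ENNReal.ofReal 1 ≤ _))
    · calc (ENNReal.ofReal T) ^ (1/(1:ℝ≥0∞).toReal - 1/q.toReal)
          ≤ (ENNReal.ofReal T) ^ (1:ℝ) := ENNReal.rpow_le_rpow_of_exponent_le h he1
        _ = ENNReal.ofReal T := by simp
        _ ≤ ENNReal.ofReal M := ENNReal.ofReal_le_ofReal hMT
  -- ν ∘ φ is integrable
  have hνint : Integrable (fun s => ν (φ s)) μ :=
    (MemLp.integrable hp ⟨hνmeas.aestronglyMeasurable, hνLp⟩)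
  set B : ℝ := (eLpNorm (fun t => ν (φ t)) p μ).toReal with hBdef
  set D : ℝ := (eLpNorm w p₁ μ).toReal with hDdef
  have hB0 : 0 ≤ B := ENNReal.toReal_nonneg
  have hD0 : 0 ≤ D := ENNReal.toReal_nonneg
  -- bound for w
  have hwInt' : Integrable w μ := hwInt
  set I : ℝ := ∫ s, ‖w s‖ ∂μ with hIdef
  have hIvol : I = ∫ s in Set.Ioc (0:ℝ) T, ‖w s‖ := by rw [hIdef, hμdef]
  have hI0 : 0 ≤ I := integral_nonneg (fun _ => norm_nonneg _)
  have hμle : μ Set.univ ≤ ENNReal.ofReal M := by rw [hμuniv]; exact ENNReal.ofReal_le_ofReal hMT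
  have hID : I ≤ M * D := aux_L1_le hM0.le hμle hpow w p₁ hp₁ hwInt' hwLp
  -- bound for ν ∘ φ
  set J : ℝ := ∫ s, ν (φ s) ∂μ with hJdef
  have hJB : J ≤ M * B := by
    have heq : ∫ s, ν (φ s) ∂μ = ∫ s, ‖ν (φ s)‖ ∂μ := by
      rw [hμdef]
      refine setIntegral_congr_fun measurableSet_Ioc (fun s hs => ?_)
      have := hν0 _ (hφS s (Set.Ioc_subset_Icc_self hs))
      simp [Real.norm_eq_abs, abs_of_nonneg this]
    rw [hJdef, heq]
    exact aux_L1_le hM0.le hμle hpow _ p hp hνint hνLp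
  -- the continuous representative
  set ψ : ℝ → A₁ := fun t => φ 0 + ∫ s in Set.Ioc (0:ℝ) t, w s with hψdef
  have hcont : ContinuousOn ψ (Set.Icc (0:ℝ) T) :=
    continuousOn_const.add
      (intervalIntegral.continuousOn_primitive ((integrableOn_Icc_iff_integrableOn_Ioc).2 hwInt))
  have haeψ : ∀ᵐ t ∂volume.restrict (Set.Icc (0:ℝ) T), φ t = ψ t := by
    filter_upwards [hae, ae_restrict_mem measurableSet_Icc] with t h1 h2
    rw [h1, hψdef]
    simp only [add_right_inj]
    rw [intervalIntegral.integral_of_le h2.1]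
  refine ⟨ψ, hcont, haeψ, ?_⟩
  intro t ht
  -- ‖∫_{Ioc 0 r} w‖ ≤ I for r ∈ [0,T]
  have hIb : ∀ r ∈ Set.Icc (0:ℝ) T, ‖∫ s in Set.Ioc (0:ℝ) r, w s‖ ≤ I := by
    intro r hr
    calc ‖∫ s in Set.Ioc (0:ℝ) r, w s‖ ≤ ∫ s in Set.Ioc (0:ℝ) r, ‖w s‖ :=
          norm_integral_le_integral_norm _
      _ ≤ I := by
          rw [hIvol]
          refine setIntegral_mono_set hwInt.norm ?_ ?_
          · filter_upwards with s using norm_nonneg _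
          · exact HasSubset.Subset.eventuallyLE (Set.Ioc_subset_Ioc_right hr.2)
  -- a.e. pointwise bound
  have hsbound : ∀ᵐ s ∂μ, ‖ψ t‖ ≤ K₀ * ν (φ s) + 2 * I := by
    have h1 : ∀ᵐ s ∂volume.restrict (Set.Icc (0:ℝ) T), ‖ψ t‖ ≤ K₀ * ν (φ s) + 2 * I := by
      filter_upwards [haeψ, ae_restrict_mem measurableSet_Icc] with s hφψ hs
      have hψt : ‖ψ t‖ ≤ ‖φ 0‖ + I := by
        calc ‖ψ t‖ ≤ ‖φ 0‖ + ‖∫ u in Set.Ioc (0:ℝ) t, w u‖ := norm_add_le _ _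
          _ ≤ ‖φ 0‖ + I := by have := hIb t ht; linarith
      have hφ0 : ‖φ 0‖ ≤ ‖ψ s‖ + I := by
        have : φ 0 = ψ s - ∫ u in Set.Ioc (0:ℝ) s, w u := by rw [hψdef]; simp
        rw [this]
        calc ‖ψ s - ∫ u in Set.Ioc (0:ℝ) s, w u‖
            ≤ ‖ψ s‖ + ‖∫ u in Set.Ioc (0:ℝ) s, w u‖ := norm_sub_le _ _
          _ ≤ ‖ψ s‖ + I := by have := hIb s hs; linarith
      have hψs : ‖ψ s‖ ≤ K₀ * ν (φ s) := by
        rw [← hφψ]; exact hK _ (hφS s hs)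
      linarith
    exact h1.filter_mono (ae_mono (Measure.restrict_mono Set.Ioc_subset_Icc_self le_rfl))
  -- integrate in s over (0,T)
  have hint : T * ‖ψ t‖ ≤ K₀ * J + 2 * I * T := by
    have hg : Integrable (fun s => K₀ * ν (φ s) + 2 * I) μ :=
      (hνint.const_mul K₀).add (integrable_const _)
    have h2 := integral_mono_ae (integrable_const ‖ψ t‖) hg hsbound
    have h5 : ∫ s, (K₀ * ν (φ s) + 2 * I) ∂μ = K₀ * J + 2 * I * T := by
      rw [integral_add (hνint.const_mul K₀) (integrable_const _), integral_const_mul,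
        integral_const, measureReal_def, hμuniv, ENNReal.toReal_ofReal hT.le, smul_eq_mul, ← hJdef]
      ring
    rw [integral_const, measureReal_def, hμuniv, ENNReal.toReal_ofReal hT.le, smul_eq_mul, h5] at h2
    linarith
  -- conclusion
  have h3 : T * ‖ψ t‖ ≤ K₀ * (M * B) + 2 * (M * D) * T := by
    nlinarith [hK₀, hT]
  rw [← mul_le_mul_iff_of_pos_left hT]
  calc T * ‖ψ t‖ ≤ K₀ * (M * B) + 2 * (M * D) * T := h3
    _ ≤ T * ((K₀ * M / T + 2 * M + 1) * (B + D)) := by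
        have h6 : T * ((K₀ * M / T + 2 * M + 1) * (B + D))
            = K₀ * M * (B + D) + T * (2 * M + 1) * (B + D) := by
          field_simp; ring
        rw [h6]
        nlinarith [mul_nonneg (mul_nonneg hK₀.le hM0.le) hD0, mul_nonneg hT.le hB0,
          mul_nonneg hT.le hD0, mul_nonneg (mul_nonneg hT.le hM0.le) hB0]
end

section
/- Let T > 0, let A₁ be a real Banach space, let 1 ≤ p < ∞, and let u : [0,T] → A₁ satisfy u(t) = u(0) + ∫₀ᵗ v(s) ds for all t ∈ [0,T], where v : (0,T) → A₁ is Bochner integrable. Let N be a positive integer, h := T/N, t_k := k·h for k = 0,…,N, and choose arbitrary points t'_k ∈ (t_{k−1}, t_k) for k = 1,…,N. Then (Σ_{k=1}^N ∫_{t_{k−1}}^{t_k} ‖u(t) − u(t'_k)‖_{A₁}^p dt)^{1/p} ≤ h^{1/p} ∫₀^T ‖v(t)‖_{A₁} dt. -/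
open Filter Topology MeasureTheory
open scoped ENNReal

lemma aux_rpow_split (x : ℝ≥0∞) {p : ℝ} (hp : 1 ≤ p) : x ^ p = x ^ (p - 1) * x := by
  have h : x ^ (p - 1) * x ^ (1 : ℝ) = x ^ (p - 1 + 1) :=
    (ENNReal.rpow_add_of_nonneg _ _ (by linarith) zero_le_one).symm
  rw [ENNReal.rpow_one] at h
  rw [h]; ring_nf

lemma aux_sum_rpow_le {ι : Type*} (s : Finset ι) (b : ι → ℝ≥0∞) {p : ℝ} (hp : 1 ≤ p) :
    ∑ i ∈ s, b i ^ p ≤ (∑ i ∈ s, b i) ^ p := by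
  calc ∑ i ∈ s, b i ^ p ≤ ∑ i ∈ s, (∑ j ∈ s, b j) ^ (p - 1) * b i := by
        refine Finset.sum_le_sum fun i hi => ?_
        rw [aux_rpow_split _ hp]
        gcongr
        exact Finset.single_le_sum (f := b) (fun j _ => zero_le) hi
    _ = (∑ j ∈ s, b j) ^ (p - 1) * ∑ i ∈ s, b i := by rw [← Finset.mul_sum]
    _ = (∑ j ∈ s, b j) ^ p := (aux_rpow_split _ hp).symm

/-- The piecewise-constant interpolation estimate used in part (b) of Lemma 2:
if u(t) = u(0) + ∫₀ᵗ v(s) ds on [0,T], then for any uniform partition of [0,T] into N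
subintervals and any sample points t'_k in the open subintervals,
(Σ_k ∫_{t_{k-1}}^{t_k} ‖u(t) − u(t'_k)‖^p dt)^{1/p} ≤ h^{1/p} ∫₀^T ‖v(t)‖ dt, with h = T/N. -/
theorem stmt4
    {A₁ : Type*} [NormedAddCommGroup A₁] [NormedSpace ℝ A₁] [CompleteSpace A₁]
    (T : ℝ) (hT : 0 < T) (p : ℝ) (hp : 1 ≤ p)
    (u v : ℝ → A₁)
    (hv : IntegrableOn v (Set.Ioc (0 : ℝ) T))
    (hu : ∀ t ∈ Set.Icc (0 : ℝ) T, u t = u 0 + ∫ s in (0 : ℝ)..t, v s)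
    (N : ℕ) (hN : 0 < N)
    (t' : ℕ → ℝ)
    (ht' : ∀ k, 1 ≤ k → k ≤ N →
      t' k ∈ Set.Ioo (((k : ℝ) - 1) * (T / N)) ((k : ℝ) * (T / N))) :
    (∑ k ∈ Finset.Icc 1 N,
        ∫⁻ t in Set.Ioc (((k : ℝ) - 1) * (T / N)) ((k : ℝ) * (T / N)),
          ENNReal.ofReal (‖u t - u (t' k)‖ ^ p)) ^ (1 / p)
      ≤ ENNReal.ofReal ((T / N) ^ (1 / p) * ∫ t in Set.Ioc (0 : ℝ) T, ‖v t‖) := by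
  have hp0 : (0:ℝ) < p := lt_of_lt_of_le one_pos hp
  have hp1 : (0:ℝ) ≤ 1 / p := by positivity
  set h := T / N with hh_def
  have hNpos : (0:ℝ) < N := Nat.cast_pos.mpr hN
  have hh : 0 < h := div_pos hT hNpos
  have hNh : (N : ℝ) * h = T := by rw [hh_def]; field_simp
  -- interval integrability of v and ‖v‖ on subintervals of [0,T]
  have hsub : ∀ a b : ℝ, a ∈ Set.Icc 0 T → b ∈ Set.Icc 0 T → Set.uIoc a b ⊆ Set.Ioc 0 T := by
    intro a b ha hb x hx
    rcases Set.mem_uIoc.mp hx with ⟨h1, h2⟩ | ⟨h1, h2⟩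
    · exact ⟨lt_of_le_of_lt ha.1 h1, le_trans h2 hb.2⟩
    · exact ⟨lt_of_le_of_lt hb.1 h1, le_trans h2 ha.2⟩
  have hvi : ∀ a b : ℝ, a ∈ Set.Icc 0 T → b ∈ Set.Icc 0 T → IntervalIntegrable v volume a b := by
    intro a b ha hb
    rw [intervalIntegrable_iff]
    exact hv.mono_set (hsub a b ha hb)
  have hvn : ∀ a b : ℝ, a ∈ Set.Icc 0 T → b ∈ Set.Icc 0 T →
      IntervalIntegrable (fun t => ‖v t‖) volume a b := by
    intro a b ha hb
    rw [intervalIntegrable_iff]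
    exact MeasureTheory.IntegrableOn.mono_set hv.norm (hsub a b ha hb)
  -- notation for the per-interval integrals of ‖v‖
  set a : ℕ → ℝ := fun k => ∫ t in Set.Ioc (((k : ℝ) - 1) * h) ((k : ℝ) * h), ‖v t‖ with ha_def
  have ha_nonneg : ∀ k, 0 ≤ a k := fun k =>
    setIntegral_nonneg measurableSet_Ioc fun t _ => norm_nonneg _
  -- endpoint bounds
  have hends : ∀ k : ℕ, 1 ≤ k → k ≤ N →
      (0:ℝ) ≤ ((k:ℝ) - 1) * h ∧ (k:ℝ) * h ≤ T := by
    intro k hk1 hkN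
    have h1 : (1:ℝ) ≤ (k:ℝ) := by exact_mod_cast hk1
    have h2 : (k:ℝ) ≤ (N:ℝ) := by exact_mod_cast hkN
    exact ⟨mul_nonneg (by linarith) hh.le, by nlinarith⟩
  -- per-interval lintegral estimate
  have step : ∀ k ∈ Finset.Icc 1 N,
      (∫⁻ t in Set.Ioc (((k : ℝ) - 1) * h) ((k : ℝ) * h),
          ENNReal.ofReal (‖u t - u (t' k)‖ ^ p))
        ≤ ENNReal.ofReal h * ENNReal.ofReal (a k) ^ p := by
    intro k hk
    obtain ⟨hk1, hkN⟩ := Finset.mem_Icc.mp hk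
    obtain ⟨he0, heT⟩ := hends k hk1 hkN
    have ht'k := ht' k hk1 hkN
    have ht'I : t' k ∈ Set.Icc 0 T := ⟨le_trans he0 ht'k.1.le, le_trans ht'k.2.le heT⟩
    have key : ∀ t ∈ Set.Ioc (((k:ℝ) - 1) * h) ((k:ℝ) * h), ‖u t - u (t' k)‖ ≤ a k := by
      intro t ht
      have htI : t ∈ Set.Icc 0 T := ⟨le_trans he0 ht.1.le, le_trans ht.2 heT⟩
      have hrw : u t - u (t' k) = ∫ s in (t' k)..t, v s := by
        rw [hu t htI, hu (t' k) ht'I, add_sub_add_left_eq_sub,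
          intervalIntegral.integral_interval_sub_left
            (hvi 0 t ⟨le_refl 0, hT.le⟩ htI) (hvi 0 (t' k) ⟨le_refl 0, hT.le⟩ ht'I)]
      rw [hrw]
      have hsub2 : Set.uIoc (t' k) t ⊆ Set.Ioc (((k:ℝ) - 1) * h) ((k:ℝ) * h) := by
        intro x hx
        rcases Set.mem_uIoc.mp hx with ⟨h1, h2⟩ | ⟨h1, h2⟩
        · exact ⟨lt_trans ht'k.1 h1, le_trans h2 ht.2⟩
        · exact ⟨lt_trans ht.1 h1, le_trans h2 ht'k.2.le⟩
      calc ‖∫ s in (t' k)..t, v s‖ ≤ ∫ s in Set.uIoc (t' k) t, ‖v s‖ :=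
            intervalIntegral.norm_integral_le_integral_norm_uIoc
        _ ≤ a k := by
            refine setIntegral_mono_set
              (MeasureTheory.IntegrableOn.mono_set hv.norm (fun x hx => ⟨lt_of_le_of_lt he0 hx.1, le_trans hx.2 heT⟩))
              (Filter.Eventually.of_forall fun x => norm_nonneg _)
              (HasSubset.Subset.eventuallyLE hsub2)
    calc (∫⁻ t in Set.Ioc (((k : ℝ) - 1) * h) ((k : ℝ) * h),
            ENNReal.ofReal (‖u t - u (t' k)‖ ^ p))
        ≤ ∫⁻ _ in Set.Ioc (((k : ℝ) - 1) * h) ((k : ℝ) * h),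
            ENNReal.ofReal ((a k) ^ p) := by
          refine setLIntegral_mono measurable_const fun t ht => ?_
          exact ENNReal.ofReal_le_ofReal
            (Real.rpow_le_rpow (norm_nonneg _) (key t ht) hp0.le)
      _ = ENNReal.ofReal ((a k) ^ p) * volume (Set.Ioc (((k : ℝ) - 1) * h) ((k : ℝ) * h)) :=
          setLIntegral_const _ _
      _ = ENNReal.ofReal h * ENNReal.ofReal (a k) ^ p := by
          rw [Real.volume_Ioc, ENNReal.ofReal_rpow_of_nonneg (ha_nonneg k) hp0.le]
          have : (k:ℝ) * h - ((k:ℝ) - 1) * h = h := by ring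
          rw [this, mul_comm]
  -- sum of the a k equals the full integral
  have hsum : ∑ k ∈ Finset.Icc 1 N, a k = ∫ t in Set.Ioc (0 : ℝ) T, ‖v t‖ := by
    have hint : ∀ k, k < N → IntervalIntegrable (fun t => ‖v t‖) volume
        ((fun i : ℕ => (i:ℝ) * h) k) ((fun i : ℕ => (i:ℝ) * h) (k+1)) := by
      intro k hk
      dsimp only
      have hk1 : (k:ℝ) + 1 ≤ (N:ℝ) := by exact_mod_cast Nat.succ_le_of_lt hk
      refine hvn _ _ ⟨by positivity, by nlinarith⟩ ⟨by positivity, by push_cast; nlinarith⟩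
    have hadj := intervalIntegral.sum_integral_adjacent_intervals
      (a := fun i : ℕ => (i : ℝ) * h) (n := N) (f := fun t => ‖v t‖) (μ := volume) hint
    simp only [Nat.cast_zero, zero_mul] at hadj
    rw [hNh] at hadj
    have hre : ∑ k ∈ Finset.Icc 1 N, a k
        = ∑ k ∈ Finset.range N, ∫ x in (((k:ℕ):ℝ) * h)..((((k+1:ℕ)):ℝ) * h), ‖v x‖ := by
      rw [← Finset.Ico_add_one_right_eq_Icc, Finset.sum_Ico_eq_sum_range]
      refine Finset.sum_congr (by simp) fun i _ => ?_
      have e1 : (((1+i:ℕ)):ℝ) - 1 = ((i:ℕ):ℝ) := by push_cast; ring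
      have e2 : (((1+i:ℕ)):ℝ) = (((i+1:ℕ)):ℝ) := by push_cast; ring
      have hle : ((i:ℕ):ℝ) * h ≤ (((i+1:ℕ)):ℝ) * h := by
        have : ((i:ℕ):ℝ) ≤ ((i+1:ℕ):ℝ) := by push_cast; linarith
        nlinarith
      simp only [ha_def, e1, e2]
      rw [show (((i+1:ℕ)):ℝ) - 1 = ((i:ℕ):ℝ) by push_cast; ring,
        intervalIntegral.integral_of_le hle]
    rw [hre, hadj, intervalIntegral.integral_of_le hT.le]
  -- put it all together
  have hI_nonneg : (0:ℝ) ≤ ∫ t in Set.Ioc (0 : ℝ) T, ‖v t‖ :=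
    setIntegral_nonneg measurableSet_Ioc fun t _ => norm_nonneg _
  calc (∑ k ∈ Finset.Icc 1 N,
        ∫⁻ t in Set.Ioc (((k : ℝ) - 1) * h) ((k : ℝ) * h),
          ENNReal.ofReal (‖u t - u (t' k)‖ ^ p)) ^ (1 / p)
      ≤ (∑ k ∈ Finset.Icc 1 N, ENNReal.ofReal h * ENNReal.ofReal (a k) ^ p) ^ (1 / p) := by
        exact ENNReal.rpow_le_rpow (Finset.sum_le_sum step) hp1
    _ = (ENNReal.ofReal h * ∑ k ∈ Finset.Icc 1 N, ENNReal.ofReal (a k) ^ p) ^ (1 / p) := by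
        rw [← Finset.mul_sum]
    _ ≤ (ENNReal.ofReal h * (∑ k ∈ Finset.Icc 1 N, ENNReal.ofReal (a k)) ^ p) ^ (1 / p) := by
        exact ENNReal.rpow_le_rpow
          (mul_le_mul_right (aux_sum_rpow_le _ _ hp) _) hp1
    _ = ENNReal.ofReal h ^ (1 / p) * ((∑ k ∈ Finset.Icc 1 N, ENNReal.ofReal (a k)) ^ p) ^ (1 / p) :=
        ENNReal.mul_rpow_of_nonneg _ _ hp1
    _ = ENNReal.ofReal h ^ (1 / p) * ∑ k ∈ Finset.Icc 1 N, ENNReal.ofReal (a k) := by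
        rw [← ENNReal.rpow_mul, mul_one_div_cancel hp0.ne', ENNReal.rpow_one]
    _ = ENNReal.ofReal (h ^ (1 / p) * ∫ t in Set.Ioc (0 : ℝ) T, ‖v t‖) := by
        rw [← ENNReal.ofReal_sum_of_nonneg (fun i _ => ha_nonneg i), hsum,
          ENNReal.ofReal_rpow_of_nonneg hh.le hp1, ← ENNReal.ofReal_mul (by positivity)]
end

section
/- Let T > 0, let A₁ be a real Banach space, let M₊ be a seminormed nonnegative cone in A₁ that is compactly embedded in A₁, and let 1 ≤ p ≤ ∞ and 1 < p₁ ≤ ∞. Then Y₊ is compactly embedded in C([0,T]; A₁): every sequence (u_n) in Y₊ with sup_n [u_n]_{Y₊} < ∞ has a subsequence whose continuous representatives converge uniformly on [0,T] in the norm of A₁. -/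
open Filter Topology MeasureTheory
open scoped ENNReal

-- aux: totally bounded from sequential compactness
lemma aux_tb {A₁ : Type*} [NormedAddCommGroup A₁] {S : Set A₁} {ν : A₁ → ℝ}
    (hcpt : ∀ a : ℕ → A₁, (∀ n, a n ∈ S) → (∃ K : ℝ, ∀ n, ν (a n) ≤ K) →
      ∃ (ψ : ℕ → ℕ) (l : A₁), StrictMono ψ ∧
        Tendsto (fun n => a (ψ n)) atTop (𝓝 l)) (C : ℝ) :
    TotallyBounded {x | x ∈ S ∧ ν x ≤ C} := by
  set B := {x | x ∈ S ∧ ν x ≤ C} with hB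
  have hseq : IsSeqCompact (closure B) := by
    intro x hx
    have hy : ∀ n : ℕ, ∃ y ∈ B, dist (x n) y < 1 / (n + 1) := by
      intro n
      exact Metric.mem_closure_iff.mp (hx n) _ (by positivity)
    choose y hyB hyd using hy
    obtain ⟨ψ, l, hψ, hl⟩ := hcpt y (fun n => (hyB n).1) ⟨C, fun n => (hyB n).2⟩
    refine ⟨l, ?_, ψ, hψ, ?_⟩
    · exact mem_closure_of_tendsto hl (Eventually.of_forall fun n => hyB (ψ n))
    · rw [tendsto_iff_dist_tendsto_zero]
      have h1 : Tendsto (fun n : ℕ => (1 : ℝ) / (n + 1) + dist (y (ψ n)) l) atTop (𝓝 0) := by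
        simpa using tendsto_one_div_add_atTop_nhds_zero_nat.add
          (tendsto_iff_dist_tendsto_zero.mp hl)
      refine squeeze_zero (fun n => dist_nonneg) (fun n => ?_) h1
      calc dist (x (ψ n)) l ≤ dist (x (ψ n)) (y (ψ n)) + dist (y (ψ n)) l := dist_triangle _ _ _
        _ ≤ 1 / (n + 1) + dist (y (ψ n)) l := by
            refine add_le_add (le_trans (hyd (ψ n)).le ?_) le_rfl
            apply one_div_le_one_div_of_le (by positivity)
            have h3 : (n : ℝ) ≤ (ψ n : ℝ) := Nat.cast_le.mpr hψ.le_apply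
            linarith
  exact (hseq.totallyBounded).subset subset_closure

/-- Lemma 2, part (a): if M₊ is compactly embedded in the Banach space A₁,
1 ≤ p ≤ ∞ and 1 < p₁ ≤ ∞, then Y₊ is compactly embedded in C([0,T];A₁): every
[·]_{Y₊}-bounded sequence in Y₊ has a subsequence whose continuous representatives
converge uniformly on [0,T] in the norm of A₁. -/
theorem stmt6
    {A₁ : Type*} [NormedAddCommGroup A₁] [NormedSpace ℝ A₁] [CompleteSpace A₁]
    (T : ℝ) (hT : 0 < T)
    -- M₊ = S is a seminormed nonnegative cone in A₁ with seminorm ν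
    (S : Set A₁) (ν : A₁ → ℝ)
    (hcone : ∀ φ ∈ S, ∀ c : ℝ, 0 ≤ c → c • φ ∈ S)
    (hν0 : ∀ φ ∈ S, 0 ≤ ν φ)
    (hνeq0 : ∀ φ ∈ S, (ν φ = 0 ↔ φ = 0))
    (hνhom : ∀ φ ∈ S, ∀ c : ℝ, 0 ≤ c → ν (c • φ) = c * ν φ)
    -- M₊ is embedded in A₁
    (hemb : ∃ K₀ > (0 : ℝ), ∀ φ ∈ S, ‖φ‖ ≤ K₀ * ν φ)
    -- the embedding of M₊ in A₁ is compact
    (hcpt : ∀ a : ℕ → A₁, (∀ n, a n ∈ S) → (∃ K : ℝ, ∀ n, ν (a n) ≤ K) →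
      ∃ (ψ : ℕ → ℕ) (l : A₁), StrictMono ψ ∧
        Tendsto (fun n => a (ψ n)) atTop (𝓝 l))
    (p p₁ : ℝ≥0∞) (hp : 1 ≤ p) (hp₁ : 1 < p₁)
    -- (u_n) is a sequence in Y₊, with derivatives (w_n)
    (u : ℕ → ℝ → A₁) (w : ℕ → ℝ → A₁)
    (huS : ∀ n, ∀ t ∈ Set.Icc (0 : ℝ) T, u n t ∈ S)
    (humeas : ∀ n, AEStronglyMeasurable (u n) (volume.restrict (Set.Ioc (0 : ℝ) T)))
    (hνmeas : ∀ n, AEMeasurable (fun t => ν (u n t)) (volume.restrict (Set.Ioc (0 : ℝ) T)))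
    (hwint : ∀ n, IntegrableOn (w n) (Set.Ioc (0 : ℝ) T))
    (hrep : ∀ n, ∀ᵐ t ∂volume.restrict (Set.Icc (0 : ℝ) T),
      u n t = u n 0 + ∫ s in (0 : ℝ)..t, w n s)
    -- the sequence is bounded in Y₊: sup_n [u_n]_{Y₊} < ∞
    (K : ℝ)
    (hbound : ∀ n,
      eLpNorm (fun t => ν (u n t)) p (volume.restrict (Set.Ioc (0 : ℝ) T))
        + eLpNorm (w n) p₁ (volume.restrict (Set.Ioc (0 : ℝ) T)) ≤ ENNReal.ofReal K) :
    ∃ ψ : ℕ → ℕ, StrictMono ψ ∧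
      ∃ g : ℕ → ℝ → A₁,
        (∀ j, ContinuousOn (g j) (Set.Icc (0 : ℝ) T) ∧
          ∀ᵐ t ∂volume.restrict (Set.Icc (0 : ℝ) T), u (ψ j) t = g j t) ∧
        ∃ L : ℝ → A₁, TendstoUniformlyOn g L atTop (Set.Icc (0 : ℝ) T) := by
  classical
  set K' : ℝ := max K 0 with hK'
  have hK'0 : 0 ≤ K' := le_max_right _ _
  set α : ℝ := 1 - 1 / p₁.toReal with hα_def
  set β : ℝ := 1 - 1 / p.toReal with hβ_def
  have hα : 0 < α := by
    rcases eq_or_ne p₁ ⊤ with h | h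
    · simp [hα_def, h]
    · have h1 : (1 : ℝ) < p₁.toReal := by
        have := ENNReal.toReal_strict_mono h hp₁
        simpa using this
      have : 1 / p₁.toReal < 1 := by
        rw [div_lt_one (by linarith)]; exact h1
      simpa [hα_def] using this
  have hβ : 0 ≤ β := by
    rcases eq_or_ne p ⊤ with h | h
    · simp [hβ_def, h]
    · have h1 : (1 : ℝ) ≤ p.toReal := by
        have := ENNReal.toReal_mono h hp
        simpa using this
      have h0 : 0 < p.toReal := by linarith
      have : 1 / p.toReal ≤ 1 := by
        rw [div_le_one h0]; exact h1
      simpa [hβ_def] using this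
  -- the continuous representatives
  set g : ℕ → ℝ → A₁ := fun n t => u n 0 + ∫ s in (0 : ℝ)..t, w n s with hg
  have hwIcc : ∀ n, IntegrableOn (w n) (Set.Icc (0 : ℝ) T) := by
    intro n
    exact (hwint n).congr_set_ae MeasureTheory.Ioc_ae_eq_Icc.symm
  have hgcont : ∀ n, ContinuousOn (g n) (Set.Icc (0 : ℝ) T) := by
    intro n
    apply continuousOn_const.add
    have := intervalIntegral.continuousOn_primitive_interval
      (a := (0:ℝ)) (b := T) (μ := volume) (f := w n) ?_
    · rwa [Set.uIcc_of_le hT.le] at this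
    · rw [Set.uIcc_of_le hT.le]; exact hwIcc n
  -- bounds on the norms
  have hwb : ∀ n, eLpNorm (w n) p₁ (volume.restrict (Set.Ioc (0 : ℝ) T)) ≤ ENNReal.ofReal K' := by
    intro n
    refine le_trans (le_trans le_add_self (hbound n)) (ENNReal.ofReal_le_ofReal (le_max_left _ _))
  have hνb : ∀ n, eLpNorm (fun t => ν (u n t)) p (volume.restrict (Set.Ioc (0 : ℝ) T))
      ≤ ENNReal.ofReal K' := by
    intro n
    refine le_trans (le_trans le_self_add (hbound n)) (ENNReal.ofReal_le_ofReal (le_max_left _ _))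
  -- the key Hölder estimate
  have hest : ∀ n, ∀ a ∈ Set.Icc (0:ℝ) T, ∀ b ∈ Set.Icc (0:ℝ) T, a ≤ b →
      ‖g n b - g n a‖ ≤ K' * (b - a) ^ α := by
    intro n a ha b hb hab
    have hsub : Set.Ioc a b ⊆ Set.Ioc 0 T := Set.Ioc_subset_Ioc ha.1 hb.2
    have hint_ab : IntegrableOn (w n) (Set.Ioc a b) := (hwint n).mono_set hsub
    have hii : ∀ c ∈ Set.Icc (0:ℝ) T, IntervalIntegrable (w n) volume 0 c := fun c hc =>
      (intervalIntegrable_iff_integrableOn_Ioc_of_le hc.1).2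
        ((hwint n).mono_set (Set.Ioc_subset_Ioc le_rfl hc.2))
    have hdiff : g n b - g n a = ∫ s in a..b, w n s := by
      simp only [hg, add_sub_add_left_eq_sub]
      exact intervalIntegral.integral_interval_sub_left (hii b hb) (hii a ha)
    have h2 : eLpNorm (w n) 1 (volume.restrict (Set.Ioc a b))
        ≤ ENNReal.ofReal K' * ENNReal.ofReal (b - a) ^ α := by
      have hmeas := hint_ab.aestronglyMeasurable
      have h3 := eLpNorm_le_eLpNorm_mul_rpow_measure_univ (p := 1) (q := p₁)
        (μ := volume.restrict (Set.Ioc a b)) hp₁.le hmeas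
      have h4 : (volume.restrict (Set.Ioc a b)) Set.univ = ENNReal.ofReal (b - a) := by
        simp [Real.volume_Ioc]
      rw [h4] at h3
      have h5 : eLpNorm (w n) p₁ (volume.restrict (Set.Ioc a b)) ≤ ENNReal.ofReal K' :=
        le_trans (eLpNorm_mono_measure _ (Measure.restrict_mono hsub le_rfl)) (hwb n)
      refine le_trans h3 ?_
      rw [show (1 / (1:ℝ≥0∞).toReal - 1 / p₁.toReal) = α by simp [hα_def]]
      exact mul_le_mul_left h5 _
    have hfin : ENNReal.ofReal K' * ENNReal.ofReal (b - a) ^ α ≠ ⊤ :=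
      ENNReal.mul_ne_top ENNReal.ofReal_ne_top
        (ENNReal.rpow_ne_top_of_nonneg hα.le ENNReal.ofReal_ne_top)
    rw [hdiff]
    calc ‖∫ s in a..b, w n s‖ ≤ ∫ s in a..b, ‖w n s‖ :=
          intervalIntegral.norm_integral_le_integral_norm hab
      _ = ∫ s in Set.Ioc a b, ‖w n s‖ := intervalIntegral.integral_of_le hab
      _ = (eLpNorm (w n) 1 (volume.restrict (Set.Ioc a b))).toReal := by
          rw [eLpNorm_one_eq_lintegral_enorm,
            ← integral_norm_eq_lintegral_enorm hint_ab.aestronglyMeasurable]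
      _ ≤ (ENNReal.ofReal K' * ENNReal.ofReal (b - a) ^ α).toReal :=
          ENNReal.toReal_mono hfin h2
      _ = K' * (b - a) ^ α := by
          rw [ENNReal.toReal_mul, ENNReal.toReal_ofReal hK'0, ← ENNReal.toReal_rpow,
            ENNReal.toReal_ofReal (by linarith)]
  have hestd : ∀ n, ∀ a ∈ Set.Icc (0:ℝ) T, ∀ b ∈ Set.Icc (0:ℝ) T,
      dist (g n a) (g n b) ≤ K' * |b - a| ^ α := by
    intro n a ha b hb
    rcases le_total a b with h | h
    · rw [dist_eq_norm, norm_sub_rev, abs_of_nonneg (by linarith)]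
      exact hest n a ha b hb h
    · rw [dist_eq_norm, abs_sub_comm, abs_of_nonneg (by linarith)]
      exact hest n b hb a ha h
  -- the approximation/selection lemma
  have hsel : ∀ ε : ℝ, 0 < ε → ∃ C : ℝ, ∀ n, ∀ t ∈ Set.Icc (0:ℝ) T,
      ∃ x, x ∈ S ∧ ν x ≤ C ∧ dist (g n t) x ≤ ε := by
    intro ε hε
    set δ : ℝ := min (T / 2) ((ε / (K' + 1)) ^ (1 / α)) with hδ_def
    have hδpos : 0 < δ := lt_min (by linarith) (Real.rpow_pos_of_pos (by positivity) _)
    have hδT : δ ≤ T / 2 := min_le_left _ _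
    have hδε : K' * δ ^ α ≤ ε := by
      have h1 : δ ^ α ≤ ((ε / (K' + 1)) ^ (1 / α)) ^ α :=
        Real.rpow_le_rpow hδpos.le (min_le_right _ _) hα.le
      have h2 : ((ε / (K' + 1)) ^ (1 / α)) ^ α = ε / (K' + 1) := by
        rw [← Real.rpow_mul (by positivity), one_div_mul_cancel hα.ne', Real.rpow_one]
      have h3 : K' * δ ^ α ≤ K' * (ε / (K' + 1)) :=
        mul_le_mul_of_nonneg_left (h1.trans_eq h2) hK'0
      refine h3.trans ?_
      rw [show K' * (ε / (K' + 1)) = K' * ε / (K' + 1) by ring, div_le_iff₀ (by positivity)]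
      nlinarith
    refine ⟨K' * δ ^ (β - 1) + 1, fun n t ht => ?_⟩
    have hδβ : (0:ℝ) < δ ^ (β - 1) := Real.rpow_pos_of_pos hδpos _
    set C : ℝ := K' * δ ^ (β - 1) + 1 with hC_def
    have hC0 : 0 < C := by positivity
    obtain ⟨a, ha0, haT, hat1, hat2⟩ : ∃ a : ℝ, 0 ≤ a ∧ a + δ ≤ T ∧ a ≤ t ∧ t ≤ a + δ := by
      rcases le_or_gt t (T / 2) with h | h
      · exact ⟨t, ht.1, by linarith, le_rfl, by linarith⟩
      · exact ⟨t - δ, by linarith, by linarith [ht.2], by linarith, by linarith⟩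
    have hIsub : Set.Ioc a (a + δ) ⊆ Set.Ioc 0 T := Set.Ioc_subset_Ioc ha0 haT
    have hIicc : Set.Ioc a (a + δ) ⊆ Set.Icc (0:ℝ) T := fun s hs =>
      ⟨le_trans ha0 hs.1.le, le_trans hs.2 haT⟩
    have hclaim : ∃ s ∈ Set.Ioc a (a + δ), ν (u n s) ≤ C ∧ u n s = g n s := by
      by_contra hcon
      push_neg at hcon
      have heq : ∀ᵐ s ∂volume.restrict (Set.Ioc a (a + δ)), u n s = g n s :=
        ae_restrict_of_ae_restrict_of_subset hIicc (hrep n)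
      have hgt : ∀ᵐ s ∂volume.restrict (Set.Ioc a (a + δ)),
          ENNReal.ofReal C ≤ ENNReal.ofReal (ν (u n s)) := by
        filter_upwards [heq, ae_restrict_mem measurableSet_Ioc] with s hseq hsI
        refine ENNReal.ofReal_le_ofReal ?_
        by_contra hlt
        exact hcon s hsI (le_of_not_ge (fun hle => hlt hle)) hseq
      have hL : ENNReal.ofReal C * ENNReal.ofReal δ
          ≤ ∫⁻ s in Set.Ioc a (a + δ), ENNReal.ofReal (ν (u n s)) := by
        have h1 := lintegral_mono_ae hgt
        rwa [lintegral_const, Measure.restrict_apply_univ, Real.volume_Ioc,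
          add_sub_cancel_left] at h1
      have hR : (∫⁻ s in Set.Ioc a (a + δ), ENNReal.ofReal (ν (u n s)))
          ≤ ENNReal.ofReal K' * ENNReal.ofReal δ ^ β := by
        have hmeas : AEStronglyMeasurable (fun t => ν (u n t))
            (volume.restrict (Set.Ioc a (a + δ))) :=
          ((hνmeas n).mono_measure (Measure.restrict_mono hIsub le_rfl)).aestronglyMeasurable
        have h1 : (∫⁻ s in Set.Ioc a (a + δ), ENNReal.ofReal (ν (u n s)))
            = eLpNorm (fun t => ν (u n t)) 1 (volume.restrict (Set.Ioc a (a + δ))) := by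
          rw [eLpNorm_one_eq_lintegral_enorm]
          refine setLIntegral_congr_fun measurableSet_Ioc (fun s hs => ?_)
          rw [← Real.enorm_eq_ofReal (hν0 _ (huS n s (hIicc hs)))]
        have h3 := eLpNorm_le_eLpNorm_mul_rpow_measure_univ (p := 1) (q := p)
          (μ := volume.restrict (Set.Ioc a (a + δ))) hp hmeas
        have h4 : (volume.restrict (Set.Ioc a (a + δ))) Set.univ = ENNReal.ofReal δ := by
          simp [Real.volume_Ioc]
        rw [h4] at h3
        have h5 : eLpNorm (fun t => ν (u n t)) p (volume.restrict (Set.Ioc a (a + δ)))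
            ≤ ENNReal.ofReal K' :=
          le_trans (eLpNorm_mono_measure _ (Measure.restrict_mono hIsub le_rfl)) (hνb n)
        rw [h1]
        refine le_trans h3 ?_
        rw [show (1 / (1:ℝ≥0∞).toReal - 1 / p.toReal) = β by simp [hβ_def]]
        exact mul_le_mul_left h5 _
      have hfin : ENNReal.ofReal K' * ENNReal.ofReal δ ^ β ≠ ⊤ :=
        ENNReal.mul_ne_top ENNReal.ofReal_ne_top
          (ENNReal.rpow_ne_top_of_nonneg hβ ENNReal.ofReal_ne_top)
      have hmono := ENNReal.toReal_mono hfin (hL.trans hR)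
      rw [ENNReal.toReal_mul, ENNReal.toReal_mul, ENNReal.toReal_ofReal hC0.le,
        ENNReal.toReal_ofReal hδpos.le, ENNReal.toReal_ofReal hK'0, ← ENNReal.toReal_rpow,
        ENNReal.toReal_ofReal hδpos.le] at hmono
      have hrw : δ ^ (β - 1) * δ = δ ^ β := by
        rw [← Real.rpow_add_one hδpos.ne' (β - 1), sub_add_cancel]
      nlinarith [hmono, hrw]
    obtain ⟨s, hsI, hνs, hus⟩ := hclaim
    refine ⟨u n s, huS n s (hIicc hsI), hνs, ?_⟩
    rw [hus]
    have hd : |s - t| ≤ δ := by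
      obtain ⟨hs1, hs2⟩ := hsI
      rw [abs_le]
      exact ⟨by linarith, by linarith⟩
    calc dist (g n t) (g n s) ≤ K' * |s - t| ^ α := hestd n t ht s (hIicc hsI)
      _ ≤ K' * δ ^ α :=
          mul_le_mul_of_nonneg_left (Real.rpow_le_rpow (abs_nonneg _) hd hα.le) hK'0
      _ ≤ ε := hδε
  -- total boundedness of the set of all values
  have hV : TotallyBounded {y | ∃ n, ∃ t ∈ Set.Icc (0:ℝ) T, g n t = y} := by
    rw [Metric.totallyBounded_iff]
    intro ε hε
    obtain ⟨C, hC⟩ := hsel (ε / 3) (by positivity)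
    have hB := aux_tb hcpt C
    rw [Metric.totallyBounded_iff] at hB
    obtain ⟨F, hFfin, hFsub⟩ := hB (ε / 3) (by positivity)
    refine ⟨F, hFfin, ?_⟩
    rintro y ⟨n, t, ht, rfl⟩
    obtain ⟨x, hxS, hxν, hxd⟩ := hC n t ht
    have : x ∈ ⋃ z ∈ F, Metric.ball z (ε / 3) := hFsub ⟨hxS, hxν⟩
    simp only [Set.mem_iUnion, Metric.mem_ball] at this ⊢
    obtain ⟨z, hzF, hzd⟩ := this
    exact ⟨z, hzF, by
      calc dist (g n t) z ≤ dist (g n t) x + dist x z := dist_triangle _ _ _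
        _ < ε / 3 + ε / 3 := by exact add_lt_add_of_le_of_lt hxd hzd
        _ < ε := by linarith⟩
  -- now apply Arzelà–Ascoli in C([0,T];A₁)
  haveI : CompactSpace (Set.Icc (0:ℝ) T) := isCompact_iff_compactSpace.mp isCompact_Icc
  set G : ℕ → BoundedContinuousFunction (Set.Icc (0:ℝ) T) A₁ := fun n =>
    BoundedContinuousFunction.mkOfCompact ⟨_, (hgcont n).restrict⟩ with hG
  have hGapp : ∀ n (x : Set.Icc (0:ℝ) T), G n x = g n ↑x := fun n x => rfl
  have hVc : IsCompact (closure {y | ∃ n, ∃ t ∈ Set.Icc (0:ℝ) T, g n t = y}) :=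
    TotallyBounded.isCompact_of_isClosed hV.closure isClosed_closure
  have hins : ∀ (f : BoundedContinuousFunction (Set.Icc (0:ℝ) T) A₁) (x : Set.Icc (0:ℝ) T),
      f ∈ Set.range G → f x ∈ closure {y | ∃ n, ∃ t ∈ Set.Icc (0:ℝ) T, g n t = y} := by
    rintro f x ⟨n, rfl⟩
    exact subset_closure ⟨n, x, x.2, rfl⟩
  have hequi : Equicontinuous ((↑) : ↥(Set.range G) → Set.Icc (0:ℝ) T → A₁) := by
    intro x₀
    rw [Metric.equicontinuousAt_iff]
    intro ε hε
    refine ⟨(ε / (K' + 1)) ^ (1 / α), Real.rpow_pos_of_pos (by positivity) _, fun y hy i => ?_⟩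
    obtain ⟨f, n, rfl⟩ := i
    have h1 : dist (G n x₀) (G n y) ≤ K' * |(y : ℝ) - (x₀ : ℝ)| ^ α := by
      rw [hGapp, hGapp]
      exact hestd n x₀ x₀.2 y y.2
    have h2 : |(y : ℝ) - (x₀ : ℝ)| ≤ (ε / (K' + 1)) ^ (1 / α) := by
      rw [Subtype.dist_eq, Real.dist_eq] at hy
      exact hy.le
    have h3 : K' * |(y : ℝ) - (x₀ : ℝ)| ^ α ≤ K' * (ε / (K' + 1)) := by
      refine mul_le_mul_of_nonneg_left ?_ hK'0
      calc |(y : ℝ) - (x₀ : ℝ)| ^ α ≤ ((ε / (K' + 1)) ^ (1 / α)) ^ α :=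
            Real.rpow_le_rpow (abs_nonneg _) h2 hα.le
        _ = ε / (K' + 1) := by
            rw [← Real.rpow_mul (by positivity), one_div_mul_cancel hα.ne', Real.rpow_one]
    have h4 : K' * (ε / (K' + 1)) < ε := by
      rw [show K' * (ε / (K' + 1)) = K' * ε / (K' + 1) by ring, div_lt_iff₀ (by positivity)]
      nlinarith
    show dist (G n x₀) (G n y) < ε
    exact lt_of_le_of_lt (h1.trans h3) h4
  have hcl : IsCompact (closure (Set.range G)) :=
    BoundedContinuousFunction.arzela_ascoli _ hVc (Set.range G) hins hequi
  obtain ⟨Flim, -, ψ, hψ, htend⟩ :=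
    hcl.isSeqCompact (fun n => subset_closure (Set.mem_range_self (f := G) n))
  refine ⟨ψ, hψ, fun j => g (ψ j), fun j => ⟨hgcont (ψ j), hrep (ψ j)⟩,
    fun t => if h : t ∈ Set.Icc (0:ℝ) T then Flim ⟨t, h⟩ else 0, ?_⟩
  rw [Metric.tendstoUniformlyOn_iff]
  intro ε hε
  obtain ⟨N, hN⟩ := Metric.tendsto_atTop.mp htend ε hε
  rw [eventually_atTop]
  refine ⟨N, fun j hj t ht => ?_⟩
  have h1 : dist (G (ψ j)) Flim < ε := hN j hj
  calc dist (if h : t ∈ Set.Icc (0:ℝ) T then Flim ⟨t, h⟩ else 0) (g (ψ j) t)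
      = dist (Flim ⟨t, ht⟩) (G (ψ j) ⟨t, ht⟩) := by rw [dif_pos ht, hGapp]
    _ ≤ dist Flim (G (ψ j)) := BoundedContinuousFunction.dist_coe_le_dist _
    _ = dist (G (ψ j)) Flim := dist_comm _ _
    _ < ε := h1
end

section
/- (Dubinskiĭ's theorem, case (a).) Let T > 0, let A₀ and A₁ be real Banach spaces with A₀ continuously embedded in A₁, and let M₊ be a seminormed nonnegative cone in A₀ that is compactly embedded in A₀. Let 1 ≤ p ≤ ∞ and 1 < p₁ ≤ ∞. Then Y₊ is compactly embedded in L^p(0,T; A₀): every sequence (u_n) in Y₊ with sup_n [u_n]_{Y₊} < ∞ has a subsequence that converges in the norm of L^p(0,T; A₀). -/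
open Filter Topology MeasureTheory
open scoped ENNReal

lemma dub_ehrling
    {A₀ A₁ : Type*} [NormedAddCommGroup A₀] [NormedSpace ℝ A₀]
    [NormedAddCommGroup A₁] [NormedSpace ℝ A₁]
    (ι : A₀ →ₗ[ℝ] A₁) (hι : Function.Injective ι)
    (C : ℝ) (hιC : ∀ a : A₀, ‖ι a‖ ≤ C * ‖a‖)
    (S : Set A₀) (ν : A₀ → ℝ)
    (hcone : ∀ φ ∈ S, ∀ c : ℝ, 0 ≤ c → c • φ ∈ S)
    (hν0 : ∀ φ ∈ S, 0 ≤ ν φ)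
    (hνeq0 : ∀ φ ∈ S, (ν φ = 0 ↔ φ = 0))
    (hνhom : ∀ φ ∈ S, ∀ c : ℝ, 0 ≤ c → ν (c • φ) = c * ν φ)
    (K₀ : ℝ) (hK₀ : ∀ φ ∈ S, ‖φ‖ ≤ K₀ * ν φ)
    (hcpt : ∀ a : ℕ → A₀, (∀ n, a n ∈ S) → (∃ K : ℝ, ∀ n, ν (a n) ≤ K) →
      ∃ (ψ : ℕ → ℕ) (l : A₀), StrictMono ψ ∧
        Tendsto (fun n => a (ψ n)) atTop (𝓝 l))
    (ε : ℝ) (hε : 0 < ε) :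
    ∃ Cε > (0:ℝ), ∀ φ ∈ S, ∀ χ ∈ S,
      ‖φ - χ‖ ≤ ε * (ν φ + ν χ) + Cε * ‖ι φ - ι χ‖ := by
  by_contra hcon
  push_neg at hcon
  have h := fun k : ℕ => hcon (k + 1) (by positivity)
  choose φ hφS χ hχS hlt using h
  -- the ι as continuous map
  have hιcont : Continuous fun x : A₀ => ι x := by
    have := AddMonoidHomClass.continuous_of_bound ι C hιC
    exact this
  set s : ℕ → ℝ := fun k => ν (φ k) + ν (χ k) with hs
  have hspos : ∀ k, 0 < s k := by
    intro k
    rcases lt_or_ge 0 (s k) with h | h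
    · exact h
    · exfalso
      have h1 : ν (φ k) = 0 := le_antisymm (by
        have := hν0 _ (hχS k); simp only [hs] at h; linarith) (hν0 _ (hφS k))
      have h2 : ν (χ k) = 0 := le_antisymm (by
        have := hν0 _ (hφS k); simp only [hs] at h; linarith) (hν0 _ (hχS k))
      have hφ0 : φ k = 0 := (hνeq0 _ (hφS k)).1 h1
      have hχ0 : χ k = 0 := (hνeq0 _ (hχS k)).1 h2
      have := hlt k
      rw [hφ0] at h1
      rw [hφ0, hχ0] at this
      rw [h1] at this
      simp only [sub_self, norm_zero, map_zero, add_zero, mul_zero, zero_add] at this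
      linarith [this]
  set a : ℕ → A₀ := fun k => (s k)⁻¹ • φ k with ha
  set b : ℕ → A₀ := fun k => (s k)⁻¹ • χ k with hb
  have haS : ∀ k, a k ∈ S := fun k => hcone _ (hφS k) _ (inv_nonneg.2 (hspos k).le)
  have hbS : ∀ k, b k ∈ S := fun k => hcone _ (hχS k) _ (inv_nonneg.2 (hspos k).le)
  have hνa : ∀ k, ν (a k) ≤ 1 := by
    intro k
    rw [ha]
    have := hνhom _ (hφS k) _ (inv_nonneg.2 (hspos k).le)
    simp only [this]
    rw [inv_mul_le_iff₀ (hspos k), mul_one]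
    have := hν0 _ (hχS k); simp only [hs]; linarith
  have hνb : ∀ k, ν (b k) ≤ 1 := by
    intro k
    rw [hb]
    have := hνhom _ (hχS k) _ (inv_nonneg.2 (hspos k).le)
    simp only [this]
    rw [inv_mul_le_iff₀ (hspos k), mul_one]
    have := hν0 _ (hφS k); simp only [hs]; linarith
  have hkey : ∀ k : ℕ, ε + ((k:ℝ) + 1) * ‖ι (a k) - ι (b k)‖ < ‖a k - b k‖ := by
    intro k
    have h1 : a k - b k = (s k)⁻¹ • (φ k - χ k) := by rw [ha, hb, smul_sub]
    have h2 : ι (a k) - ι (b k) = (s k)⁻¹ • (ι (φ k) - ι (χ k)) := by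
      rw [ha, hb, _root_.map_smul, _root_.map_smul, smul_sub]
    have hinv : (0:ℝ) < (s k)⁻¹ := inv_pos.2 (hspos k)
    rw [h1, h2, norm_smul, norm_smul, Real.norm_of_nonneg hinv.le]
    have := hlt k
    have hmul := mul_lt_mul_of_pos_left this hinv
    calc ε + ((k:ℝ)+1) * ((s k)⁻¹ * ‖ι (φ k) - ι (χ k)‖)
        = (s k)⁻¹ * (ε * s k + ((k:ℝ)+1) * ‖ι (φ k) - ι (χ k)‖) := by
          have hne : s k ≠ 0 := ne_of_gt (hspos k)
          field_simp
      _ < (s k)⁻¹ * ‖φ k - χ k‖ := hmul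
  -- extract convergent subsequences
  obtain ⟨ψ₁, l₁, hψ₁, hl₁⟩ := hcpt a haS ⟨1, hνa⟩
  obtain ⟨ψ₂, l₂, hψ₂, hl₂⟩ := hcpt (b ∘ ψ₁) (fun k => hbS _) ⟨1, fun k => hνb _⟩
  set σ : ℕ → ℕ := ψ₁ ∘ ψ₂ with hσ
  have hσmono : StrictMono σ := hψ₁.comp hψ₂
  have hla : Tendsto (fun k => a (σ k)) atTop (𝓝 l₁) :=
    hl₁.comp hψ₂.tendsto_atTop
  have hlb : Tendsto (fun k => b (σ k)) atTop (𝓝 l₂) := hl₂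
  -- norms bounded
  set M : ℝ := max K₀ 0 with hM
  have hM0 : 0 ≤ M := le_max_right _ _
  have hbd : ∀ k, ‖a k - b k‖ ≤ 2 * M := by
    intro k
    have h1 := hK₀ _ (haS k)
    have h2 := hK₀ _ (hbS k)
    have h1' : ‖a k‖ ≤ M * ν (a k) :=
      h1.trans (mul_le_mul_of_nonneg_right (le_max_left _ _) (hν0 _ (haS k)))
    have h2' : ‖b k‖ ≤ M * ν (b k) :=
      h2.trans (mul_le_mul_of_nonneg_right (le_max_left _ _) (hν0 _ (hbS k)))
    calc ‖a k - b k‖ ≤ ‖a k‖ + ‖b k‖ := norm_sub_le _ _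
      _ ≤ M * ν (a k) + M * ν (b k) := add_le_add h1' h2'
      _ ≤ M * 1 + M * 1 := add_le_add
          (mul_le_mul_of_nonneg_left (hνa k) hM0)
          (mul_le_mul_of_nonneg_left (hνb k) hM0)
      _ = 2 * M := by ring
  have hDlt : ∀ k : ℕ, ‖ι (a k) - ι (b k)‖ ≤ 2 * M / ((k:ℝ) + 1) := by
    intro k
    have h1 := hkey k
    have h2 := hbd k
    have hk1 : (0:ℝ) < (k:ℝ)+1 := by positivity
    rw [le_div_iff₀ hk1]
    nlinarith [norm_nonneg (ι (a k) - ι (b k)), hε]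
  have hD0 : Tendsto (fun k => ‖ι (a k) - ι (b k)‖) atTop (𝓝 0) := by
    apply squeeze_zero (fun k => norm_nonneg _) hDlt
    have h1 : Tendsto (fun k : ℕ => 1 / ((k:ℝ) + 1)) atTop (𝓝 0) :=
      tendsto_one_div_add_atTop_nhds_zero_nat
    have := h1.const_mul (2 * M)
    simp only [mul_zero] at this
    convert this using 2 with k
    field_simp
  -- limits coincide
  have hDσ : Tendsto (fun k => ‖ι (a (σ k)) - ι (b (σ k))‖) atTop (𝓝 0) :=
    hD0.comp hσmono.tendsto_atTop
  have hDσ' : Tendsto (fun k => ‖ι (a (σ k)) - ι (b (σ k))‖) atTop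
      (𝓝 ‖ι l₁ - ι l₂‖) := by
    have h1 : Tendsto (fun k => ι (a (σ k))) atTop (𝓝 (ι l₁)) :=
      (hιcont.tendsto l₁).comp hla
    have h2 : Tendsto (fun k => ι (b (σ k))) atTop (𝓝 (ι l₂)) :=
      (hιcont.tendsto l₂).comp hlb
    exact ((h1.sub h2).norm)
  have heq : ι l₁ = ι l₂ := by
    have := tendsto_nhds_unique hDσ' hDσ
    rwa [norm_sub_eq_zero_iff] at this
  have hl12 : l₁ = l₂ := hι heq
  -- but distances stay ≥ ε
  have hdist : Tendsto (fun k => ‖a (σ k) - b (σ k)‖) atTop (𝓝 ‖l₁ - l₂‖) :=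
    (hla.sub hlb).norm
  have hge : ε ≤ ‖l₁ - l₂‖ := by
    apply le_of_tendsto_of_tendsto' tendsto_const_nhds hdist
    intro k
    have h1 := hkey (σ k)
    have h2 : (0:ℝ) ≤ ((σ k : ℕ):ℝ) + 1 := by positivity
    nlinarith [norm_nonneg (ι (a (σ k)) - ι (b (σ k)))]
  rw [hl12, sub_self, norm_zero] at hge
  linarith

set_option maxHeartbeats 2000000 in
/-- Dubinskiĭ's theorem, case (a): A₀ ↪ A₁ Banach spaces, M₊ a seminormed nonnegative
cone compactly embedded in A₀, 1 ≤ p ≤ ∞, 1 < p₁ ≤ ∞. Then Y₊ is compactly embedded in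
L^p(0,T;A₀): every [·]_{Y₊}-bounded sequence has a subsequence converging in L^p(0,T;A₀). -/
theorem stmt8
    {A₀ A₁ : Type*} [NormedAddCommGroup A₀] [NormedSpace ℝ A₀] [CompleteSpace A₀]
    [NormedAddCommGroup A₁] [NormedSpace ℝ A₁] [CompleteSpace A₁]
    -- A₀ is continuously embedded in A₁ via the injective linear map `ι`
    (ι : A₀ →ₗ[ℝ] A₁) (hι : Function.Injective ι)
    (C : ℝ) (hC : 0 < C) (hιC : ∀ a : A₀, ‖ι a‖ ≤ C * ‖a‖)
    (T : ℝ) (hT : 0 < T)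
    -- M₊ = S is a seminormed nonnegative cone in A₀ with seminorm ν
    (S : Set A₀) (ν : A₀ → ℝ)
    (hcone : ∀ φ ∈ S, ∀ c : ℝ, 0 ≤ c → c • φ ∈ S)
    (hν0 : ∀ φ ∈ S, 0 ≤ ν φ)
    (hνeq0 : ∀ φ ∈ S, (ν φ = 0 ↔ φ = 0))
    (hνhom : ∀ φ ∈ S, ∀ c : ℝ, 0 ≤ c → ν (c • φ) = c * ν φ)
    -- M₊ is embedded in A₀
    (hemb : ∃ K₀ > (0 : ℝ), ∀ φ ∈ S, ‖φ‖ ≤ K₀ * ν φ)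
    -- the embedding of M₊ in A₀ is compact
    (hcpt : ∀ a : ℕ → A₀, (∀ n, a n ∈ S) → (∃ K : ℝ, ∀ n, ν (a n) ≤ K) →
      ∃ (ψ : ℕ → ℕ) (l : A₀), StrictMono ψ ∧
        Tendsto (fun n => a (ψ n)) atTop (𝓝 l))
    -- 1 ≤ p ≤ ∞ and 1 < p₁ ≤ ∞
    (p p₁ : ℝ≥0∞) (hp : 1 ≤ p) (hp₁ : 1 < p₁)
    -- (u_n) is a sequence in Y₊, with derivatives (w_n) taking values in A₁
    (u : ℕ → ℝ → A₀) (w : ℕ → ℝ → A₁)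
    (huS : ∀ n, ∀ t ∈ Set.Icc (0 : ℝ) T, u n t ∈ S)
    (humeas : ∀ n, AEStronglyMeasurable (u n) (volume.restrict (Set.Ioc (0 : ℝ) T)))
    (hνmeas : ∀ n, AEMeasurable (fun t => ν (u n t)) (volume.restrict (Set.Ioc (0 : ℝ) T)))
    (hwint : ∀ n, IntegrableOn (w n) (Set.Ioc (0 : ℝ) T))
    (hrep : ∀ n, ∀ᵐ t ∂volume.restrict (Set.Icc (0 : ℝ) T),
      ι (u n t) = ι (u n 0) + ∫ s in (0 : ℝ)..t, w n s)
    -- the sequence is bounded in Y₊: sup_n [u_n]_{Y₊} < ∞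
    (K : ℝ)
    (hbound : ∀ n,
      eLpNorm (fun t => ν (u n t)) p (volume.restrict (Set.Ioc (0 : ℝ) T))
        + eLpNorm (w n) p₁ (volume.restrict (Set.Ioc (0 : ℝ) T)) ≤ ENNReal.ofReal K) :
    ∃ ψ : ℕ → ℕ, StrictMono ψ ∧
      ∃ g : ℝ → A₀,
        Tendsto
          (fun j => eLpNorm (fun t => u (ψ j) t - g t) p (volume.restrict (Set.Ioc (0 : ℝ) T)))
          atTop (𝓝 0) := by
  classical
  obtain ⟨K₀, hK₀pos, hK₀⟩ := hemb
  set μ := volume.restrict (Set.Ioc (0 : ℝ) T) with hμdef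
  set K' : ℝ := max K 0 with hK'def
  have hK'0 : 0 ≤ K' := le_max_right _ _
  have hbν : ∀ n, eLpNorm (fun t => ν (u n t)) p μ ≤ ENNReal.ofReal K' := by
    intro n
    refine le_trans (le_trans le_self_add (hbound n)) ?_
    exact ENNReal.ofReal_le_ofReal (le_max_left _ _)
  have hbw : ∀ n, eLpNorm (w n) p₁ μ ≤ ENNReal.ofReal K' := by
    intro n
    refine le_trans (le_trans le_add_self (hbound n)) ?_
    exact ENNReal.ofReal_le_ofReal (le_max_left _ _)
  -- the Hölder exponent
  set θ : ℝ := 1 - 1 / p₁.toReal with hθdef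
  have hθpos : 0 < θ := by
    rcases eq_or_ne p₁ ∞ with h | h
    · simp [hθdef, h]
    · have h1 : 1 < p₁.toReal := by
        rw [← ENNReal.toReal_one]
        exact ENNReal.toReal_strict_mono h hp₁
      have : 1 / p₁.toReal < 1 := by
        rw [div_lt_one (by linarith)]; linarith
      simp only [hθdef]; linarith
  have hθ1 : θ ≤ 1 := by
    have : 0 ≤ 1 / p₁.toReal := by positivity
    simp only [hθdef]; linarith
  -- the continuous representatives
  set c : ℕ → ℝ → A₁ := fun n t => ι (u n 0) + ∫ s in (0 : ℝ)..t, w n s with hcdef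
  -- Hölder estimate for the primitive
  have hhold : ∀ n, ∀ s t : ℝ, 0 ≤ s → s ≤ t → t ≤ T →
      ‖∫ x in s..t, w n x‖ ≤ K' * (t - s) ^ θ := by
    intro n s t hs hst htT
    have hsub : Set.Ioc s t ⊆ Set.Ioc (0:ℝ) T := Set.Ioc_subset_Ioc hs htT
    have hwint' : IntegrableOn (w n) (Set.Ioc s t) := (hwint n).mono_set hsub
    have h1 : (‖∫ x in s..t, w n x‖₊ : ℝ≥0∞) ≤ ∫⁻ x in Set.Ioc s t, ‖w n x‖₊ := by
      rw [intervalIntegral.integral_of_le hst]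
      exact enorm_integral_le_lintegral_enorm _
    have h2 : (∫⁻ x in Set.Ioc s t, (‖w n x‖₊ : ℝ≥0∞))
        = eLpNorm (w n) 1 (volume.restrict (Set.Ioc s t)) :=
      by rw [eLpNorm_one_eq_lintegral_enorm]; rfl
    have h3 : eLpNorm (w n) 1 (volume.restrict (Set.Ioc s t))
        ≤ eLpNorm (w n) p₁ (volume.restrict (Set.Ioc s t))
          * (volume.restrict (Set.Ioc s t) Set.univ) ^ (1/(1:ℝ≥0∞).toReal - 1/p₁.toReal) :=
      eLpNorm_le_eLpNorm_mul_rpow_measure_univ hp₁.le hwint'.aestronglyMeasurable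
    have h4 : eLpNorm (w n) p₁ (volume.restrict (Set.Ioc s t)) ≤ eLpNorm (w n) p₁ μ := by
      rw [hμdef]
      exact eLpNorm_mono_measure _ (Measure.restrict_mono hsub le_rfl)
    have h5 : (volume.restrict (Set.Ioc s t) Set.univ) = ENNReal.ofReal (t - s) := by
      rw [Measure.restrict_apply_univ, Real.volume_Ioc]
    have h6 : (1/(1:ℝ≥0∞).toReal - 1/p₁.toReal) = θ := by
      simp [hθdef]
    have h7 : (‖∫ x in s..t, w n x‖₊ : ℝ≥0∞) ≤ ENNReal.ofReal (K' * (t - s) ^ θ) := by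
      calc (‖∫ x in s..t, w n x‖₊ : ℝ≥0∞)
          ≤ eLpNorm (w n) 1 (volume.restrict (Set.Ioc s t)) := h2 ▸ h1
        _ ≤ eLpNorm (w n) p₁ (volume.restrict (Set.Ioc s t))
              * (volume.restrict (Set.Ioc s t) Set.univ) ^ (1/(1:ℝ≥0∞).toReal - 1/p₁.toReal) := h3
        _ ≤ ENNReal.ofReal K' * (ENNReal.ofReal (t - s)) ^ θ := by
              rw [h5, h6]
              exact mul_le_mul' (h4.trans (hbw n)) le_rfl
        _ = ENNReal.ofReal (K' * (t - s) ^ θ) := by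
              rw [ENNReal.ofReal_rpow_of_nonneg (sub_nonneg.2 hst) hθpos.le,
                ← ENNReal.ofReal_mul hK'0]
    change ‖(∫ x in s..t, w n x)‖ₑ ≤ _ at h7; rw [← ofReal_norm] at h7
    exact (ENNReal.ofReal_le_ofReal_iff
      (mul_nonneg hK'0 (Real.rpow_nonneg (sub_nonneg.2 hst) θ))).1 h7
  -- modulus of continuity for c
  have hc2 : ∀ n, ∀ x ∈ Set.Icc (0:ℝ) T, ∀ y ∈ Set.Icc (0:ℝ) T,
      ‖c n x - c n y‖ ≤ K' * |x - y| ^ θ := by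
    have hII : ∀ n, ∀ z ∈ Set.Icc (0:ℝ) T, IntervalIntegrable (w n) volume 0 z := by
      intro n z hz
      rw [intervalIntegrable_iff]
      have h1 : Set.uIoc (0:ℝ) z = Set.Ioc 0 z := Set.uIoc_of_le hz.1
      rw [h1]
      exact (hwint n).mono_set (Set.Ioc_subset_Ioc le_rfl hz.2)
    have hmain : ∀ n, ∀ x ∈ Set.Icc (0:ℝ) T, ∀ y ∈ Set.Icc (0:ℝ) T, y ≤ x →
        ‖c n x - c n y‖ ≤ K' * |x - y| ^ θ := by
      intro n x hx y hy hyx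
      have h1 : c n x - c n y = ∫ s in y..x, w n s := by
        simp only [hcdef]
        rw [add_sub_add_left_eq_sub]
        exact intervalIntegral.integral_interval_sub_left (hII n x hx) (hII n y hy)
      rw [h1, abs_of_nonneg (by linarith)]
      exact hhold n y x hy.1 hyx hx.2
    intro n x hx y hy
    rcases le_total y x with hyx | hxy
    · exact hmain n x hx y hy hyx
    · rw [norm_sub_rev, abs_sub_comm]
      exact hmain n y hy x hx hxy
  -- L¹-type bound for ν ∘ u and Chebyshev
  set B₁ : ℝ≥0∞ := ENNReal.ofReal K' * max 1 (ENNReal.ofReal T) with hB₁def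
  have hB₁top : B₁ ≠ ∞ := by
    simp only [hB₁def]
    exact ENNReal.mul_ne_top ENNReal.ofReal_ne_top
      (by simp [ENNReal.ofReal_ne_top])
  have hμuniv : μ Set.univ = ENNReal.ofReal T := by
    rw [hμdef, Measure.restrict_apply_univ, Real.volume_Ioc, sub_zero]
  have hcheb : ∀ n (R : ℝ), 0 < R →
      μ {x | R ≤ ν (u n x)} ≤ B₁ / ENNReal.ofReal R := by
    intro n R hR
    have hf : AEMeasurable (fun x => ENNReal.ofReal (ν (u n x))) μ :=
      ENNReal.measurable_ofReal.comp_aemeasurable (hνmeas n)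
    have h0 : {x | R ≤ ν (u n x)} ⊆ {x | ENNReal.ofReal R ≤ ENNReal.ofReal (ν (u n x))} :=
      fun x hx => ENNReal.ofReal_le_ofReal hx
    have h1 := mul_meas_ge_le_lintegral₀ hf (ENNReal.ofReal R)
    have h2 : ∫⁻ x, ENNReal.ofReal (ν (u n x)) ∂μ ≤ B₁ := by
      have h3 : ∫⁻ x, ENNReal.ofReal (ν (u n x)) ∂μ ≤ ∫⁻ x, (‖ν (u n x)‖₊ : ℝ≥0∞) ∂μ :=
        lintegral_mono fun x => Real.ofReal_le_enorm _
      have h4 : (∫⁻ x, (‖ν (u n x)‖₊ : ℝ≥0∞) ∂μ) = eLpNorm (fun t => ν (u n t)) 1 μ :=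
        by rw [eLpNorm_one_eq_lintegral_enorm]; rfl
      have h5 : eLpNorm (fun t => ν (u n t)) 1 μ ≤ eLpNorm (fun t => ν (u n t)) p μ
          * (μ Set.univ) ^ (1/(1:ℝ≥0∞).toReal - 1/p.toReal) :=
        eLpNorm_le_eLpNorm_mul_rpow_measure_univ hp (hνmeas n).aestronglyMeasurable
      have hexp : (μ Set.univ) ^ (1/(1:ℝ≥0∞).toReal - 1/p.toReal)
          ≤ max 1 (ENNReal.ofReal T) := by
        rw [hμuniv]
        have he0 : 0 ≤ 1/(1:ℝ≥0∞).toReal - 1/p.toReal := by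
          simp only [ENNReal.toReal_one]
          have h6 : 1/p.toReal ≤ 1 := by
            rcases eq_or_ne p ∞ with h|h
            · simp [h]
            · have h7 : 1 ≤ p.toReal := by
                rw [← ENNReal.toReal_one]
                exact ENNReal.toReal_mono h hp
              rw [div_le_one (by linarith)]; linarith
          linarith
        have he1 : 1/(1:ℝ≥0∞).toReal - 1/p.toReal ≤ 1 := by
          simp only [ENNReal.toReal_one]
          have : 0 ≤ 1/p.toReal := by positivity
          linarith
        rcases le_total (ENNReal.ofReal T) 1 with h|h
        · exact le_trans (ENNReal.rpow_le_one h he0) (le_max_left _ _)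
        · refine le_trans ?_ (le_max_right _ _)
          calc (ENNReal.ofReal T) ^ (1/(1:ℝ≥0∞).toReal - 1/p.toReal)
              ≤ (ENNReal.ofReal T) ^ (1:ℝ) :=
                ENNReal.rpow_le_rpow_of_exponent_le h he1
            _ = ENNReal.ofReal T := ENNReal.rpow_one _
      calc ∫⁻ x, ENNReal.ofReal (ν (u n x)) ∂μ
          ≤ eLpNorm (fun t => ν (u n t)) 1 μ := h4 ▸ h3
        _ ≤ eLpNorm (fun t => ν (u n t)) p μ
            * (μ Set.univ) ^ (1/(1:ℝ≥0∞).toReal - 1/p.toReal) := h5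
        _ ≤ ENNReal.ofReal K' * max 1 (ENNReal.ofReal T) := mul_le_mul' (hbν n) hexp
        _ = B₁ := rfl
    have h6 : ENNReal.ofReal R * μ {x | R ≤ ν (u n x)} ≤ B₁ := by
      refine le_trans ?_ (h1.trans h2)
      exact mul_le_mul_right (measure_mono h0) _
    rw [ENNReal.le_div_iff_mul_le (Or.inl (by simp [hR]))
      (Or.inl ENNReal.ofReal_ne_top), mul_comm]
    exact h6
  -- existence of good sample points
  have hrep' : ∀ n, ∀ᵐ t ∂μ, ι (u n t) = c n t :=
    fun n => ae_restrict_of_ae_restrict_of_subset Set.Ioc_subset_Icc_self (hrep n)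
  have hgood : ∀ n, ∀ t ∈ Set.Icc (0:ℝ) T, ∀ δ : ℝ, 0 < δ → δ ≤ T → ∀ R : ℝ, 0 < R →
      B₁ / ENNReal.ofReal R < ENNReal.ofReal δ →
      ∃ s ∈ Set.Ioc (0:ℝ) T, |s - t| ≤ δ ∧ ν (u n s) ≤ R ∧ ι (u n s) = c n s := by
    intro n t ht δ hδ hδT R hR hRδ
    set a : ℝ := min t (T - δ) with hadef
    have ha0 : 0 ≤ a := le_min ht.1 (by linarith)
    have haδ : a + δ ≤ T := by
      have := min_le_right t (T - δ); simp only [hadef]; linarith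
    have hat : a ≤ t := min_le_left _ _
    have htaδ : t ≤ a + δ := by
      rcases le_total t (T - δ) with h|h
      · have : a = t := min_eq_left h
        linarith
      · have : a = T - δ := min_eq_right h
        have := ht.2
        linarith
    have hsub : Set.Ioc a (a + δ) ⊆ Set.Ioc 0 T := Set.Ioc_subset_Ioc ha0 haδ
    have hE₂0 : μ {x | ι (u n x) ≠ c n x} = 0 := by
      have h := hrep' n
      rw [MeasureTheory.ae_iff] at h
      exact h
    by_contra hno
    push_neg at hno
    have hcover : Set.Ioc a (a + δ) ⊆ {x | R ≤ ν (u n x)} ∪ {x | ι (u n x) ≠ c n x} := by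
      intro x hx
      rcases le_or_gt R (ν (u n x)) with h | h
      · exact Or.inl h
      · refine Or.inr ?_
        have habs : |x - t| ≤ δ := by
          rw [abs_le]
          constructor
          · linarith [hx.1, hx.2]
          · linarith [hx.1, hx.2]
        exact hno x (hsub hx) habs h.le
    have hμI : μ (Set.Ioc a (a+δ)) = ENNReal.ofReal δ := by
      rw [hμdef, Measure.restrict_apply measurableSet_Ioc,
        Set.inter_eq_self_of_subset_left hsub, Real.volume_Ioc, add_sub_cancel_left]
    have hle : μ (Set.Ioc a (a+δ)) ≤ μ {x | R ≤ ν (u n x)} + μ {x | ι (u n x) ≠ c n x} :=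
      le_trans (measure_mono hcover) (measure_union_le _ _)
    rw [hμI, hE₂0, add_zero] at hle
    exact absurd (lt_of_le_of_lt (hle.trans (hcheb n R hR)) hRδ) (lt_irrefl _)
  -- Σ_R is totally bounded
  have hSR : ∀ R : ℝ, TotallyBounded {φ : A₀ | φ ∈ S ∧ ν φ ≤ R} := by
    intro R
    have hseq : IsSeqCompact (closure {φ : A₀ | φ ∈ S ∧ ν φ ≤ R}) := by
      intro x hx
      have hchoice : ∀ k : ℕ, ∃ y, (y ∈ S ∧ ν y ≤ R) ∧ dist (x k) y < 1/((k:ℝ)+1) := by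
        intro k
        have h1 := hx k
        rw [Metric.mem_closure_iff] at h1
        obtain ⟨y, hy1, hy2⟩ := h1 (1/((k:ℝ)+1)) (by positivity)
        exact ⟨y, hy1, hy2⟩
      choose y hyS hyd using hchoice
      obtain ⟨ψ', l, hψ', hl⟩ := hcpt y (fun k => (hyS k).1) ⟨R, fun k => (hyS k).2⟩
      refine ⟨l, ?_, ψ', hψ', ?_⟩
      · exact mem_closure_of_tendsto hl
          (Filter.Eventually.of_forall fun k => hyS (ψ' k))
      · rw [tendsto_iff_dist_tendsto_zero]
        apply squeeze_zero (fun k => dist_nonneg)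
          (g := fun k : ℕ => 1/((k:ℝ)+1) + dist (y (ψ' k)) l)
        · intro k
          have h1 : dist (x (ψ' k)) (y (ψ' k)) < 1/(((ψ' k):ℝ)+1) := hyd _
          have h2 : 1/(((ψ' k):ℝ)+1) ≤ 1/((k:ℝ)+1) := by
            apply one_div_le_one_div_of_le (by positivity)
            have h3 : k ≤ ψ' k := hψ'.le_apply
            have : (k:ℝ) ≤ ((ψ' k):ℝ) := by exact_mod_cast h3
            linarith
          calc dist ((x ∘ ψ') k) l
              ≤ dist (x (ψ' k)) (y (ψ' k)) + dist (y (ψ' k)) l := dist_triangle _ _ _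
            _ ≤ 1/((k:ℝ)+1) + dist (y (ψ' k)) l := by
                linarith
        · have h1 : Tendsto (fun k : ℕ => 1/((k:ℝ)+1)) atTop (𝓝 0) :=
            tendsto_one_div_add_atTop_nhds_zero_nat
          have h2 : Tendsto (fun k => dist (y (ψ' k)) l) atTop (𝓝 0) :=
            tendsto_iff_dist_tendsto_zero.1 hl
          simpa using h1.add h2
    exact (hseq.isCompact.totallyBounded).subset subset_closure
  -- the orbits {c n t} are totally bounded in A₁
  have hιunif : UniformContinuous fun φ : A₀ => ι φ :=
    (AddMonoidHomClass.lipschitz_of_bound ι.toAddMonoidHom C hιC).uniformContinuous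
  have hD : ∀ t ∈ Set.Icc (0:ℝ) T, TotallyBounded (Set.range fun n => c n t) := by
    intro t ht
    rw [Metric.totallyBounded_iff]
    intro ε hε
    set x₀ : ℝ := (ε/(3*(K'+1))) ^ (1/θ) with hx₀
    have hx₀pos : 0 < x₀ := Real.rpow_pos_of_pos (by positivity) _
    set δ : ℝ := min T x₀ with hδdef
    have hδpos : 0 < δ := lt_min hT hx₀pos
    have hδT : δ ≤ T := min_le_left _ _
    have hKδ : K' * δ ^ θ ≤ ε/3 := by
      have h1 : δ ^ θ ≤ x₀ ^ θ :=
        Real.rpow_le_rpow hδpos.le (min_le_right _ _) hθpos.le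
      have h2 : x₀ ^ θ = ε/(3*(K'+1)) := by
        rw [hx₀, one_div, Real.rpow_inv_rpow (by positivity) (ne_of_gt hθpos)]
      have h3 : K' * (ε/(3*(K'+1))) ≤ ε/3 := by
        have h4 : K' * (ε/(3*(K'+1))) ≤ (K'+1) * (ε/(3*(K'+1))) :=
          mul_le_mul_of_nonneg_right (by linarith) (by positivity)
        have h5 : (K'+1) * (ε/(3*(K'+1))) = ε/3 := by field_simp
        linarith
      calc K' * δ ^ θ ≤ K' * x₀ ^ θ := mul_le_mul_of_nonneg_left h1 hK'0
        _ = K' * (ε/(3*(K'+1))) := by rw [h2]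
        _ ≤ ε/3 := h3
    set R : ℝ := 2*(B₁.toReal + 1)/δ with hRdef
    have hRpos : 0 < R := by positivity
    have hRδ : B₁ / ENNReal.ofReal R < ENNReal.ofReal δ := by
      rw [ENNReal.div_lt_iff (Or.inl (by simp [ENNReal.ofReal_eq_zero]; nlinarith))
        (Or.inl ENNReal.ofReal_ne_top)]
      rw [← ENNReal.ofReal_mul hδpos.le]
      have h1 : δ * R = 2*(B₁.toReal+1) := by
        rw [hRdef]; field_simp
      rw [h1]
      conv_lhs => rw [← ENNReal.ofReal_toReal hB₁top]
      rw [ENNReal.ofReal_lt_ofReal_iff (by positivity)]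
      linarith [ENNReal.toReal_nonneg (a := B₁)]
    have himg : TotallyBounded ((fun φ => ι φ) '' {φ : A₀ | φ ∈ S ∧ ν φ ≤ R}) :=
      (hSR R).image hιunif
    rw [Metric.totallyBounded_iff] at himg
    obtain ⟨F, hFfin, hFcov⟩ := himg (ε/3) (by positivity)
    refine ⟨F, hFfin, ?_⟩
    rintro _ ⟨n, rfl⟩
    obtain ⟨s, hsIoc, hst, hνR, hιc⟩ := hgood n t ht δ hδpos hδT R hRpos hRδ
    have hsIcc : s ∈ Set.Icc (0:ℝ) T := ⟨hsIoc.1.le, hsIoc.2⟩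
    have hmem1 : ι (u n s) ∈ (fun φ => ι φ) '' {φ : A₀ | φ ∈ S ∧ ν φ ≤ R} :=
      ⟨u n s, ⟨huS n s hsIcc, hνR⟩, rfl⟩
    obtain ⟨y, hyF, hydist⟩ := Set.mem_iUnion₂.1 (hFcov hmem1)
    have hclose : ‖c n t - c n s‖ ≤ ε/3 := by
      have h1 := hc2 n t ht s hsIcc
      have habs : |t - s| ^ θ ≤ δ ^ θ :=
        Real.rpow_le_rpow (abs_nonneg _) (by rw [abs_sub_comm]; exact hst) hθpos.le
      calc ‖c n t - c n s‖ ≤ K' * |t-s|^θ := h1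
        _ ≤ K' * δ^θ := mul_le_mul_of_nonneg_left habs hK'0
        _ ≤ ε/3 := hKδ
    refine Set.mem_iUnion₂.2 ⟨y, hyF, ?_⟩
    rw [Metric.mem_ball]
    have hyb : dist (ι (u n s)) y < ε/3 := Metric.mem_ball.1 hydist
    have h2 : dist (c n t) y ≤ dist (c n t) (c n s) + dist (c n s) y := dist_triangle _ _ _
    have h5 : dist (c n t) (c n s) ≤ ε/3 := by rw [dist_eq_norm]; exact hclose
    have h6 : dist (c n s) y < ε/3 := by rw [← hιc]; exact hyb
    calc dist (c n t) y ≤ dist (c n t) (c n s) + dist (c n s) y := h2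
      _ < ε := by linarith
  -- extraction of a subsequence converging at a dense set of times
  obtain ⟨ψ, hψmono, hunif⟩ :
      ∃ ψ : ℕ → ℕ, StrictMono ψ ∧ ∀ e : ℝ, 0 < e → ∃ N, ∀ m ≥ N, ∀ n ≥ N,
        ∀ t ∈ Set.Icc (0:ℝ) T, ‖c (ψ m) t - c (ψ n) t‖ ≤ e := by
    haveI : Nonempty (Set.Icc (0:ℝ) T) := ⟨⟨0, Set.mem_Icc.2 ⟨le_refl 0, hT.le⟩⟩⟩
    obtain ⟨qs, hqs⟩ := TopologicalSpace.exists_dense_seq (Set.Icc (0:ℝ) T)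
    set q : ℕ → ℝ := fun k => (qs k : ℝ) with hq
    have hqmem : ∀ k, q k ∈ Set.Icc (0:ℝ) T := fun k => (qs k).2
    have hDc : ∀ k : ℕ, IsCompact (closure (Set.range fun n => c n (q k))) := fun k =>
      TotallyBounded.isCompact_of_isClosed ((hD (q k) (hqmem k)).closure) isClosed_closure
    have h𝒦cpt : IsCompact (Set.univ.pi
        (fun k : ℕ => closure (Set.range fun n => c n (q k)))) := isCompact_univ_pi hDc
    have hΦmem : ∀ n : ℕ, (fun k => c n (q k)) ∈ Set.univ.pi
        (fun k : ℕ => closure (Set.range fun n => c n (q k))) := fun n =>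
      Set.mem_univ_pi.2 fun k => subset_closure ⟨n, rfl⟩
    obtain ⟨l, hl𝒦, ψ, hψmono, hψtend⟩ :=
      h𝒦cpt.isSeqCompact (x := fun n k => c n (q k)) hΦmem
    have hptk : ∀ k : ℕ, CauchySeq fun j => c (ψ j) (q k) := by
      intro k
      have h1 := (tendsto_pi_nhds.1 hψtend) k
      exact h1.cauchySeq
    refine ⟨ψ, hψmono, ?_⟩
    intro e he
    set x₀ : ℝ := (e/(3*(K'+1))) ^ (1/θ) with hx₀
    have hx₀pos : 0 < x₀ := Real.rpow_pos_of_pos (by positivity) _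
    set δ : ℝ := min T x₀ with hδdef
    have hδpos : 0 < δ := lt_min hT hx₀pos
    have hKδ : K' * δ ^ θ ≤ e/3 := by
      have h1 : δ ^ θ ≤ x₀ ^ θ :=
        Real.rpow_le_rpow hδpos.le (min_le_right _ _) hθpos.le
      have h2 : x₀ ^ θ = e/(3*(K'+1)) := by
        rw [hx₀, one_div, Real.rpow_inv_rpow (by positivity) (ne_of_gt hθpos)]
      have h3 : K' * (e/(3*(K'+1))) ≤ e/3 := by
        have h4 : K' * (e/(3*(K'+1))) ≤ (K'+1) * (e/(3*(K'+1))) :=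
          mul_le_mul_of_nonneg_right (by linarith) (by positivity)
        have h5 : (K'+1) * (e/(3*(K'+1))) = e/3 := by field_simp
        linarith
      calc K' * δ ^ θ ≤ K' * x₀ ^ θ := mul_le_mul_of_nonneg_left h1 hK'0
        _ = K' * (e/(3*(K'+1))) := by rw [h2]
        _ ≤ e/3 := h3
    have hcov : Set.Icc (0:ℝ) T ⊆ ⋃ k : ℕ, Metric.ball (q k) δ := by
      intro t ht
      obtain ⟨k, hk⟩ := (Metric.denseRange_iff.1 hqs) ⟨t, ht⟩ δ hδpos
      rw [Subtype.dist_eq] at hk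
      exact Set.mem_iUnion.2 ⟨k, Metric.mem_ball.2 hk⟩
    obtain ⟨F, hF⟩ := isCompact_Icc.elim_finite_subcover
      (fun k : ℕ => Metric.ball (q k) δ) (fun k => Metric.isOpen_ball) hcov
    have hNk : ∀ k : ℕ, ∃ N, ∀ m ≥ N, ∀ n ≥ N,
        dist (c (ψ m) (q k)) (c (ψ n) (q k)) < e/3 :=
      fun k => Metric.cauchySeq_iff.1 (hptk k) (e/3) (by positivity)
    choose Nk hNk using hNk
    refine ⟨F.sup Nk, ?_⟩
    intro m hm n hn t ht
    obtain ⟨k, hkF, hkball⟩ : ∃ k ∈ F, t ∈ Metric.ball (q k) δ := by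
      have h1 := hF ht
      simp only [Set.mem_iUnion, exists_prop] at h1
      exact h1
    have hdt : |t - q k| ≤ δ := by
      have := Metric.mem_ball.1 hkball
      rw [Real.dist_eq] at this
      exact this.le
    have hbd1 : ∀ m', ‖c (ψ m') t - c (ψ m') (q k)‖ ≤ e/3 := by
      intro m'
      have h1 := hc2 (ψ m') t ht (q k) (hqmem k)
      have habs : |t - q k| ^ θ ≤ δ ^ θ :=
        Real.rpow_le_rpow (abs_nonneg _) hdt hθpos.le
      calc ‖c (ψ m') t - c (ψ m') (q k)‖ ≤ K' * |t - q k|^θ := h1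
        _ ≤ K' * δ^θ := mul_le_mul_of_nonneg_left habs hK'0
        _ ≤ e/3 := hKδ
    have hmid : ‖c (ψ m) (q k) - c (ψ n) (q k)‖ ≤ e/3 := by
      have h1 := hNk k m (le_trans (Finset.le_sup hkF) hm) n (le_trans (Finset.le_sup hkF) hn)
      rw [dist_eq_norm] at h1
      exact h1.le
    calc ‖c (ψ m) t - c (ψ n) t‖
        ≤ ‖c (ψ m) t - c (ψ m) (q k)‖ + ‖c (ψ m) (q k) - c (ψ n) t‖ :=
          norm_sub_le_norm_sub_add_norm_sub _ _ _
      _ ≤ ‖c (ψ m) t - c (ψ m) (q k)‖ + (‖c (ψ m) (q k) - c (ψ n) (q k)‖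
            + ‖c (ψ n) (q k) - c (ψ n) t‖) := by
          have := norm_sub_le_norm_sub_add_norm_sub (c (ψ m) (q k)) (c (ψ n) (q k)) (c (ψ n) t)
          linarith
      _ ≤ e/3 + (e/3 + e/3) := by
          have h1 := hbd1 m
          have h2 := hbd1 n
          rw [norm_sub_rev] at h2
          linarith [hmid]
      _ = e := by ring
  -- membership in Lp
  have hmem : ∀ n, MemLp (u n) p μ := by
    intro n
    refine ⟨humeas n, ?_⟩
    have h1 : ∀ᵐ t ∂μ, ‖u n t‖ ≤ ‖K₀ * ν (u n t)‖ := by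
      filter_upwards [ae_restrict_mem measurableSet_Ioc] with t ht
      exact (hK₀ _ (huS n t ⟨ht.1.le, ht.2⟩)).trans (le_abs_self _)
    have h1' : (fun t => K₀ * ν (u n t)) = K₀ • (fun t => ν (u n t)) := rfl
    have h2 : eLpNorm (u n) p μ ≤ ‖K₀‖₊ • eLpNorm (fun t => ν (u n t)) p μ := by
      refine (eLpNorm_mono_ae h1).trans ?_
      rw [h1']
      exact eLpNorm_const_smul_le
    have h3 : ‖K₀‖₊ • eLpNorm (fun t => ν (u n t)) p μ
        ≤ (‖K₀‖₊ : ℝ≥0∞) * ENNReal.ofReal K' := by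
      rw [ENNReal.smul_def, smul_eq_mul]
      exact mul_le_mul_right (hbν n) _
    refine lt_of_le_of_lt (h2.trans h3) ?_
    exact ENNReal.mul_lt_top ENNReal.coe_lt_top ENNReal.ofReal_lt_top
  haveI : Fact (1 ≤ p) := ⟨hp⟩
  set f : ℕ → Lp A₀ p μ := fun j => (hmem (ψ j)).toLp (u (ψ j)) with hfdef
  have hcauchy : CauchySeq f := by
    rw [Metric.cauchySeq_iff]
    intro ε hε
    set e₂ : ℝ := ε/(8*(K'+1)) with he₂
    have he₂pos : 0 < e₂ := by positivity
    obtain ⟨C₂, hC₂pos, hC₂⟩ :=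
      dub_ehrling ι hι C hιC S ν hcone hν0 hνeq0 hνhom K₀ hK₀ hcpt e₂ he₂pos
    set Tp : ℝ := ((ENNReal.ofReal T) ^ p.toReal⁻¹).toReal with hTp
    have hTp0 : 0 ≤ Tp := ENNReal.toReal_nonneg
    set e₃ : ℝ := (ε/4)/(C₂ * (Tp + 1)) with he₃
    have he₃pos : 0 < e₃ := by positivity
    obtain ⟨N, hN⟩ := hunif e₃ he₃pos
    refine ⟨N, fun m hm n hn => ?_⟩
    have hae : ∀ᵐ t ∂μ, ‖u (ψ m) t - u (ψ n) t‖
        ≤ e₂ * ν (u (ψ m) t) + (e₂ * ν (u (ψ n) t) + C₂ * e₃) := by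
      filter_upwards [ae_restrict_mem measurableSet_Ioc, hrep' (ψ m), hrep' (ψ n)]
        with t ht h₁ h₂
      have htIcc : t ∈ Set.Icc (0:ℝ) T := ⟨ht.1.le, ht.2⟩
      have h3 := hC₂ _ (huS (ψ m) t htIcc) _ (huS (ψ n) t htIcc)
      rw [h₁, h₂] at h3
      have h4 : ‖c (ψ m) t - c (ψ n) t‖ ≤ e₃ := hN m hm n hn t htIcc
      have h5 : C₂ * ‖c (ψ m) t - c (ψ n) t‖ ≤ C₂ * e₃ :=
        mul_le_mul_of_nonneg_left h4 hC₂pos.le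
      linarith
    have hae' : ∀ᵐ t ∂μ, ‖u (ψ m) t - u (ψ n) t‖
        ≤ ‖e₂ * ν (u (ψ m) t) + (e₂ * ν (u (ψ n) t) + C₂ * e₃)‖ :=
      hae.mono fun t h => h.trans (le_abs_self _)
    have hg : eLpNorm (fun t => u (ψ m) t - u (ψ n) t) p μ
        ≤ eLpNorm (fun t => e₂ * ν (u (ψ m) t) + (e₂ * ν (u (ψ n) t) + C₂ * e₃)) p μ :=
      eLpNorm_mono_ae hae'
    have hsm1 : AEStronglyMeasurable (fun t => e₂ * ν (u (ψ m) t)) μ :=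
      ((hνmeas (ψ m)).const_mul e₂).aestronglyMeasurable
    have hsm2 : AEStronglyMeasurable (fun t => e₂ * ν (u (ψ n) t)) μ :=
      ((hνmeas (ψ n)).const_mul e₂).aestronglyMeasurable
    have hsm3 : AEStronglyMeasurable (fun _ : ℝ => C₂ * e₃) μ := aestronglyMeasurable_const
    have hsplit : eLpNorm (fun t => e₂ * ν (u (ψ m) t) + (e₂ * ν (u (ψ n) t) + C₂ * e₃)) p μ
        ≤ eLpNorm (fun t => e₂ * ν (u (ψ m) t)) p μ
          + (eLpNorm (fun t => e₂ * ν (u (ψ n) t)) p μ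
            + eLpNorm (fun _ : ℝ => C₂ * e₃) p μ) :=
      le_trans (eLpNorm_add_le hsm1 (hsm2.add hsm3) hp)
        (add_le_add_right (eLpNorm_add_le hsm2 hsm3 hp) _)
    have hpiece : ∀ n', eLpNorm (fun t => e₂ * ν (u n' t)) p μ ≤ ENNReal.ofReal (ε/8) := by
      intro n'
      have h5 : eLpNorm (fun t => e₂ * ν (u n' t)) p μ
          ≤ ‖e₂‖₊ • eLpNorm (fun t => ν (u n' t)) p μ := by
        have h5' : (fun t => e₂ * ν (u n' t)) = e₂ • (fun t => ν (u n' t)) := rfl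
        rw [h5']
        exact eLpNorm_const_smul_le
      have h6 : (‖e₂‖₊ : ℝ≥0∞) = ENNReal.ofReal e₂ := Real.enorm_eq_ofReal he₂pos.le
      have h7 : e₂ * K' ≤ ε/8 := by
        have h8 : e₂ * K' ≤ e₂ * (K'+1) :=
          mul_le_mul_of_nonneg_left (by linarith) he₂pos.le
        have h9 : e₂ * (K'+1) = ε/8 := by rw [he₂]; field_simp
        exact le_of_le_of_eq h8 h9
      calc eLpNorm (fun t => e₂ * ν (u n' t)) p μ
          ≤ ‖e₂‖₊ • eLpNorm (fun t => ν (u n' t)) p μ := h5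
        _ = ENNReal.ofReal e₂ * eLpNorm (fun t => ν (u n' t)) p μ := by
            rw [ENNReal.smul_def, smul_eq_mul, h6]
        _ ≤ ENNReal.ofReal e₂ * ENNReal.ofReal K' := mul_le_mul_right (hbν n') _
        _ = ENNReal.ofReal (e₂ * K') := (ENNReal.ofReal_mul he₂pos.le).symm
        _ ≤ ENNReal.ofReal (ε/8) := ENNReal.ofReal_le_ofReal h7
    have hconst : eLpNorm (fun _ : ℝ => C₂ * e₃) p μ ≤ ENNReal.ofReal (ε/4) := by
      have h7 : ∀ᵐ t ∂μ, ‖(fun _ : ℝ => C₂ * e₃) t‖ ≤ C₂ * e₃ :=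
        Filter.Eventually.of_forall fun t => le_of_eq (Real.norm_of_nonneg (by positivity))
      have h8 : eLpNorm (fun _ : ℝ => C₂ * e₃) p μ
          ≤ μ Set.univ ^ p.toReal⁻¹ * ENNReal.ofReal (C₂ * e₃) :=
        eLpNorm_le_of_ae_bound h7
      have hTpne : (ENNReal.ofReal T) ^ p.toReal⁻¹ ≠ ⊤ :=
        ENNReal.rpow_ne_top_of_nonneg (by positivity) ENNReal.ofReal_ne_top
      have h9 : Tp * (C₂ * e₃) ≤ ε/4 := by
        have h10 : C₂ * e₃ = (ε/4)/(Tp+1) := by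
          rw [he₃]; field_simp
        rw [h10]
        have h11 : Tp * (ε/4/(Tp+1)) = (ε/4) * (Tp/(Tp+1)) := by ring
        have h12 : Tp/(Tp+1) ≤ 1 := by
          rw [div_le_one (by linarith)]; linarith
        rw [h11]
        nlinarith [hε.le]
      calc eLpNorm (fun _ : ℝ => C₂ * e₃) p μ
          ≤ μ Set.univ ^ p.toReal⁻¹ * ENNReal.ofReal (C₂ * e₃) := h8
        _ = ENNReal.ofReal Tp * ENNReal.ofReal (C₂ * e₃) := by
            rw [hμuniv, hTp, ENNReal.ofReal_toReal hTpne]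
        _ = ENNReal.ofReal (Tp * (C₂ * e₃)) := (ENNReal.ofReal_mul hTp0).symm
        _ ≤ ENNReal.ofReal (ε/4) := ENNReal.ofReal_le_ofReal h9
    have htot : eLpNorm (fun t => u (ψ m) t - u (ψ n) t) p μ ≤ ENNReal.ofReal (ε/2) := by
      have h11 := hg.trans (hsplit.trans (add_le_add (hpiece (ψ m))
        (add_le_add (hpiece (ψ n)) hconst)))
      refine h11.trans (le_of_eq ?_)
      rw [← ENNReal.ofReal_add (by positivity) (by positivity),
        ← ENNReal.ofReal_add (by positivity) (by positivity)]
      congr 1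
      ring
    have hco : dist (f m) (f n) = (eLpNorm (fun t => u (ψ m) t - u (ψ n) t) p μ).toReal := by
      rw [Lp.dist_def]
      congr 1
      apply eLpNorm_congr_ae
      filter_upwards [MemLp.coeFn_toLp (hmem (ψ m)), MemLp.coeFn_toLp (hmem (ψ n))]
        with t h1 h2
      simp only [hfdef, Pi.sub_apply, h1, h2]
    rw [hco]
    have h12 := ENNReal.toReal_mono ENNReal.ofReal_ne_top htot
    rw [ENNReal.toReal_ofReal (by positivity)] at h12
    linarith
  obtain ⟨G, hG⟩ := cauchySeq_tendsto_of_complete hcauchy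
  refine ⟨ψ, hψmono, ⇑G, ?_⟩
  have hkey : ∀ j, eLpNorm (fun t => u (ψ j) t - G t) p μ
      = ENNReal.ofReal (dist (f j) G) := by
    intro j
    have h1 : (fun t => u (ψ j) t - G t) =ᵐ[μ] (⇑(f j - G)) := by
      have h2 : ⇑(f j) =ᵐ[μ] u (ψ j) := MemLp.coeFn_toLp _
      filter_upwards [h2, Lp.coeFn_sub (f j) G] with t ht hsub
      rw [hsub]; simp [ht]
    have hne : eLpNorm (⇑(f j) - ⇑G) p μ ≠ ⊤ := by
      rw [← eLpNorm_congr_ae (Lp.coeFn_sub (f j) G)]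
      exact Lp.eLpNorm_ne_top _
    rw [eLpNorm_congr_ae h1, eLpNorm_congr_ae (Lp.coeFn_sub (f j) G), Lp.dist_def,
      ENNReal.ofReal_toReal hne]
  simp only [hkey]
  have hdist : Tendsto (fun j => dist (f j) G) atTop (𝓝 0) :=
    tendsto_iff_dist_tendsto_zero.1 hG
  have := (ENNReal.continuous_ofReal.tendsto 0).comp hdist
  simpa [Function.comp_def] using this
end
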